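/- arXiv:math/0610640 — 6 statements merged into one kernel-verified Lean document; each statement's English description precedes it below -/
import Mathlib

section
/- Any permutation of {1,...,n} with m cycles (counting fixed points as cycles) admits a transitive star factorization of length n+m-2, i.e., an ordered list of n+m-2 transpositions of the form (1 i) with 2 ≤ i ≤ n whose product (left to right) equals the permutation and whose factors generate a subgroup acting transitively on {1,...,n}. -/
/-- A list of star transpositions: each factor is `(1 i)` with `i ≠ 1`
(here `0 : Fin n` plays the role of the symbol 1). -/
def IsStarList {n : ℕ} [NeZero n] (l : List (Equiv.Perm (Fin n))) : Prop :=
  ∀ τ ∈ l, ∃ i : Fin n, i ≠ 0 ∧ τ = Equiv.swap 0 i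

/-- A star factorization of `π`: a list of star transpositions whose ordered
product equals `π`. -/
def IsStarFactorization {n : ℕ} [NeZero n] (π : Equiv.Perm (Fin n))
    (l : List (Equiv.Perm (Fin n))) : Prop :=
  IsStarList l ∧ l.prod = π

/-- The subgroup generated by the factors acts transitively. -/
def IsTransitiveList {n : ℕ} (l : List (Equiv.Perm (Fin n))) : Prop :=
  ∀ x y : Fin n, ∃ g ∈ Subgroup.closure {τ | τ ∈ l}, g x = y

/-- Number of cycles of `π`, counting fixed points as cycles. -/
def numCycles {n : ℕ} (π : Equiv.Perm (Fin n)) : ℕ :=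
  π.cycleType.card + (Finset.univ.filter fun x => π x = x).card

open Equiv Equiv.Perm List

theorem starA {n : ℕ} [NeZero n] (L : List (Fin n)) (h : (0 :: L).Nodup) :
    (L.reverse.map (Equiv.swap 0)).prod = (0 :: L).formPerm := by
  induction L using List.reverseRecOn with
  | nil => simp
  | append_singleton M b ih =>
    have hb : (b :: 0 :: M).Nodup := by
      simp only [List.nodup_cons, List.mem_cons, List.mem_append, List.mem_singleton,
        List.nodup_append, List.nodup_singleton] at h ⊢
      tauto
    have h' : (0 :: M).Nodup := hb.of_cons
    have hrot : (b :: 0 :: M).rotate 1 = 0 :: (M ++ [b]) := by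
      rw [List.rotate_cons_succ, List.rotate_zero]; simp
    rw [List.reverse_append, List.reverse_singleton, List.singleton_append, List.map_cons,
      List.prod_cons, ih h', ← hrot, List.formPerm_rotate_one _ hb,
      List.formPerm_cons_cons, Equiv.swap_comm]

theorem starCycle {n : ℕ} [NeZero n] (σ : Equiv.Perm (Fin n)) (hσ : σ.IsCycle) :
    ∃ l : List (Equiv.Perm (Fin n)),
      (∀ τ ∈ l, ∃ i : Fin n, i ≠ 0 ∧ τ = Equiv.swap 0 i) ∧ l.prod = σ ∧
      l.length + 2 = σ.support.card + 1 +
        (if (0 : Fin n) ∈ σ.support then 0 else 2) ∧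
      ∀ x ∈ σ.support, x ≠ 0 → Equiv.swap 0 x ∈ l := by
  classical
  by_cases h0 : (0 : Fin n) ∈ σ.support
  · -- cycle through 0
    have hne : σ.toList 0 ≠ [] := by rwa [Ne, Equiv.Perm.toList_eq_nil_iff, not_not]
    obtain ⟨a, L, hT⟩ : ∃ a L, σ.toList 0 = a :: L := by
      cases hTT : σ.toList 0 with
      | nil => exact absurd hTT hne
      | cons a L => exact ⟨a, L, rfl⟩
    have ha : a = 0 := by
      symm; simpa [hT] using (Equiv.Perm.toList_getElem_zero σ 0 h0).symm
    subst ha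
    have hnd : ((0 : Fin n) :: L).Nodup := hT ▸ Equiv.Perm.nodup_toList σ 0
    have hcyc : σ.cycleOf 0 = σ := hσ.cycleOf_eq (Equiv.Perm.mem_support.mp h0)
    have hform : ((0 : Fin n) :: L).formPerm = σ := by
      rw [← hT, Equiv.Perm.formPerm_toList, hcyc]
    refine ⟨L.reverse.map (Equiv.swap 0), ?_, ?_, ?_, ?_⟩
    · rintro τ hτ
      simp only [List.mem_map, List.mem_reverse] at hτ
      obtain ⟨i, hi, rfl⟩ := hτ
      exact ⟨i, fun hi0 => (List.nodup_cons.mp hnd).1 (hi0 ▸ hi), rfl⟩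
    · rw [starA L hnd, hform]
    · have hlen : ((0 : Fin n) :: L).length = σ.support.card := by
        rw [← hT, Equiv.Perm.length_toList, hcyc]
      simp only [List.length_cons] at hlen
      simp only [List.length_map, List.length_reverse, if_pos h0]
      omega
    · intro x hx hx0
      have hxT : x ∈ ((0 : Fin n) :: L) := by
        rw [← hT, Equiv.Perm.mem_toList_iff]
        exact ⟨hσ.sameCycle (Equiv.Perm.mem_support.mp h0) (Equiv.Perm.mem_support.mp hx), h0⟩
      have : x ∈ L := by
        rcases List.mem_cons.mp hxT with h | h
        · exact absurd h hx0
        · exact h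
      exact List.mem_map.mpr ⟨x, List.mem_reverse.mpr this, rfl⟩
  · -- cycle avoiding 0
    obtain ⟨x, hx, -⟩ := id hσ
    have hxs : x ∈ σ.support := Equiv.Perm.mem_support.mpr hx
    have hne : σ.toList x ≠ [] := by rwa [Ne, Equiv.Perm.toList_eq_nil_iff, not_not]
    obtain ⟨a, M, hT⟩ : ∃ a M, σ.toList x = a :: M := by
      cases hTT : σ.toList x with
      | nil => exact absurd hTT hne
      | cons a M => exact ⟨a, M, rfl⟩
    have ha : a = x := by
      symm; simpa [hT] using (Equiv.Perm.toList_getElem_zero σ x hxs).symm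
    subst ha
    have hnd : (a :: M).Nodup := hT ▸ Equiv.Perm.nodup_toList σ a
    have hcyc : σ.cycleOf a = σ := hσ.cycleOf_eq hx
    have hform : (a :: M).formPerm = σ := by
      rw [← hT, Equiv.Perm.formPerm_toList, hcyc]
    have hsupp : σ.support = (a :: M).toFinset := by
      rw [← hform]
      exact List.support_formPerm_of_nodup _ hnd
        (fun y => hT ▸ Equiv.Perm.toList_ne_singleton σ a y)
    have h0T : (0 : Fin n) ∉ (a :: M) := by
      intro hmem
      exact h0 (hsupp ▸ List.mem_toFinset.mpr hmem)
    have hnd0 : ((0 : Fin n) :: a :: M).Nodup := List.nodup_cons.mpr ⟨h0T, hnd⟩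
    have ha0 : a ≠ 0 := fun h => h0T (h ▸ List.mem_cons_self (a := a) (l := M))
    refine ⟨Equiv.swap 0 a :: ((a :: M).reverse.map (Equiv.swap 0)), ?_, ?_, ?_, ?_⟩
    · rintro τ hτ
      rcases List.mem_cons.mp hτ with h | h
      · exact ⟨a, ha0, h⟩
      · simp only [List.mem_map, List.mem_reverse] at h
        obtain ⟨i, hi, rfl⟩ := h
        exact ⟨i, fun hi0 => h0T (hi0 ▸ hi), rfl⟩
    · rw [List.prod_cons, starA _ hnd0, List.formPerm_cons_cons, hform, ← mul_assoc,
        Equiv.swap_mul_self, one_mul]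
    · have hlen : (a :: M).length = σ.support.card := by
        rw [← hT, Equiv.Perm.length_toList, hcyc]
      simp only [List.length_cons, List.length_map, List.length_reverse, if_neg h0] at *
      omega
    · intro y hy _
      have : y ∈ (a :: M) := List.mem_toFinset.mp (hsupp ▸ hy)
      exact List.mem_cons_of_mem _ (List.mem_map.mpr ⟨y, List.mem_reverse.mpr this, rfl⟩)

theorem starWordOfPerm {n : ℕ} [NeZero n] (π : Equiv.Perm (Fin n)) :
    ∃ l : List (Equiv.Perm (Fin n)),
      (∀ τ ∈ l, ∃ i : Fin n, i ≠ 0 ∧ τ = Equiv.swap 0 i) ∧ l.prod = π ∧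
      l.length + 2 = π.support.card + π.cycleType.card +
        (if (0 : Fin n) ∈ π.support then 0 else 2) ∧
      ∀ x ∈ π.support, x ≠ 0 → Equiv.swap 0 x ∈ l := by
  classical
  induction π using Equiv.Perm.cycle_induction_on with
  | base_one => exact ⟨[], by simp, by simp, by simp, by simp⟩
  | base_cycles σ hσ =>
    obtain ⟨l, h1, h2, h3, h4⟩ := starCycle σ hσ
    exact ⟨l, h1, h2, by rw [hσ.cycleType]; simpa using h3, h4⟩
  | induction_disjoint σ τ hd hσ ihσ ihτ =>
    obtain ⟨lσ, s1, s2, s3, s4⟩ := ihσ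
    obtain ⟨lτ, t1, t2, t3, t4⟩ := ihτ
    have hsupp : (σ * τ).support = σ.support ∪ τ.support := hd.support_mul
    have hcard : (σ * τ).support.card = σ.support.card + τ.support.card :=
      hd.card_support_mul
    have hct : (σ * τ).cycleType.card = σ.cycleType.card + τ.cycleType.card := by
      rw [hd.cycleType_mul, Multiset.card_add]
    have hdisj : _root_.Disjoint σ.support τ.support := hd.disjoint_support
    refine ⟨lσ ++ lτ, ?_, ?_, ?_, ?_⟩
    · intro x hx
      rcases List.mem_append.mp hx with h | h
      · exact s1 x h
      · exact t1 x h
    · rw [List.prod_append, s2, t2]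
    · rw [List.length_append, hcard, hct]
      have hmem : ((0 : Fin n) ∈ (σ * τ).support) = ((0:Fin n) ∈ σ.support ∨ 0 ∈ τ.support) := by
        rw [hsupp]; simp [Finset.mem_union]
      have hnot : ¬((0 : Fin n) ∈ σ.support ∧ (0 : Fin n) ∈ τ.support) := fun ⟨h1, h2⟩ =>
        (Finset.disjoint_left.mp hdisj h1) h2
      simp only [hmem]
      by_cases hc1 : (0 : Fin n) ∈ σ.support
      · have hc2 : (0 : Fin n) ∉ τ.support := fun h => hnot ⟨hc1, h⟩
        rw [if_pos hc1] at s3; rw [if_neg hc2] at t3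
        rw [if_pos (Or.inl hc1)]; omega
      · by_cases hc2 : (0 : Fin n) ∈ τ.support
        · rw [if_neg hc1] at s3; rw [if_pos hc2] at t3
          rw [if_pos (Or.inr hc2)]; omega
        · rw [if_neg hc1] at s3; rw [if_neg hc2] at t3
          rw [if_neg (by tauto)]; omega
    · intro x hx hx0
      rw [hsupp, Finset.mem_union] at hx
      rcases hx with h | h
      · exact List.mem_append.mpr (Or.inl (s4 x h hx0))
      · exact List.mem_append.mpr (Or.inr (t4 x h hx0))

theorem pairs_prod {n : ℕ} [NeZero n] (L : List (Fin n)) :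
    (L.flatMap fun a => [Equiv.swap 0 a, Equiv.swap 0 a]).prod = 1 := by
  induction L with
  | nil => simp
  | cons a L ih => simp [List.flatMap_cons, ih, ← mul_assoc]

theorem pairs_length {n : ℕ} [NeZero n] (L : List (Fin n)) :
    (L.flatMap fun a => [Equiv.swap 0 a, Equiv.swap 0 a]).length = 2 * L.length := by
  induction L with
  | nil => simp
  | cons a L ih => simp [List.flatMap_cons, ih]; omega

theorem stmt0' {n : ℕ} [NeZero n] (π : Equiv.Perm (Fin n)) :
    ∃ l : List (Equiv.Perm (Fin n)),
      l.length = n + (π.cycleType.card + (Finset.univ.filter fun x => π x = x).card) - 2 ∧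
      ((∀ τ ∈ l, ∃ i : Fin n, i ≠ 0 ∧ τ = Equiv.swap 0 i) ∧ l.prod = π) ∧
      (∀ x y : Fin n, ∃ g ∈ Subgroup.closure {τ | τ ∈ l}, g x = y) := by
  classical
  obtain ⟨l, h1, h2, h3, h4⟩ := starWordOfPerm π
  set Fix : Finset (Fin n) := Finset.univ.filter fun x => π x = x with hFix
  set F : Finset (Fin n) := Fix.erase 0 with hF
  set P : List (Equiv.Perm (Fin n)) :=
    F.toList.flatMap fun a => [Equiv.swap 0 a, Equiv.swap 0 a] with hP
  have hsf : π.support.card + Fix.card = n := by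
    have hunion : π.support ∪ Fix = Finset.univ := by
      ext z
      simp only [Finset.mem_union, Finset.mem_univ, iff_true, hFix, Finset.mem_filter,
        Equiv.Perm.mem_support]
      tauto
    have hdisj : _root_.Disjoint π.support Fix := by
      rw [Finset.disjoint_left]
      intro z hz hzf
      exact (Equiv.Perm.mem_support.mp hz) ((Finset.mem_filter.mp hzf).2)
    have hcu := Finset.card_union_of_disjoint hdisj
    rw [hunion, Finset.card_univ, Fintype.card_fin] at hcu
    omega
  have hPlen : P.length = 2 * F.card := by
    rw [hP, pairs_length, Finset.length_toList]
  have h0supp : ((0 : Fin n) ∈ π.support) ↔ ¬ π 0 = 0 := Equiv.Perm.mem_support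
  refine ⟨l ++ P, ?_, ⟨?_, ?_⟩, ?_⟩
  · rw [List.length_append, hPlen]
    by_cases h0 : π 0 = 0
    · have h0s : (0 : Fin n) ∉ π.support := by rw [h0supp]; exact not_not_intro h0
      rw [if_neg h0s] at h3
      have h0F : (0 : Fin n) ∈ Fix := Finset.mem_filter.mpr ⟨Finset.mem_univ _, h0⟩
      have : F.card = Fix.card - 1 := by rw [hF, Finset.card_erase_of_mem h0F]
      have hle : 1 ≤ Fix.card := Finset.card_pos.mpr ⟨0, h0F⟩
      omega
    · have h0s : (0 : Fin n) ∈ π.support := h0supp.mpr h0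
      rw [if_pos h0s] at h3
      have h0F : (0 : Fin n) ∉ Fix := fun h => h0 (Finset.mem_filter.mp h).2
      have : F.card = Fix.card := by rw [hF, Finset.erase_eq_of_notMem h0F]
      omega
  · intro τ hτ
    rcases List.mem_append.mp hτ with h | h
    · exact h1 τ h
    · rw [hP] at h
      obtain ⟨a, ha, hmem⟩ := List.mem_flatMap.mp h
      have ha0 : a ≠ 0 := (Finset.mem_erase.mp (Finset.mem_toList.mp ha)).1
      rcases List.mem_cons.mp hmem with h' | h'
      · exact ⟨a, ha0, h'⟩
      · rcases List.mem_cons.mp h' with h'' | h''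
        · exact ⟨a, ha0, h''⟩
        · exact absurd h'' List.not_mem_nil
  · rw [List.prod_append, h2, hP, pairs_prod, mul_one]
  · intro x y
    have key : ∀ z : Fin n, Equiv.swap 0 z ∈ Subgroup.closure {τ | τ ∈ l ++ P} := by
      intro z
      by_cases hz : z = 0
      · subst hz
        rw [Equiv.swap_self]
        exact Subgroup.one_mem _
      · have hmem : Equiv.swap 0 z ∈ l ++ P := by
          by_cases hzs : z ∈ π.support
          · exact List.mem_append.mpr (Or.inl (h4 z hzs hz))
          · have hzf : π z = z := by
              rwa [Equiv.Perm.mem_support, not_not] at hzs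
            have hzF : z ∈ F := Finset.mem_erase.mpr
              ⟨hz, Finset.mem_filter.mpr ⟨Finset.mem_univ z, hzf⟩⟩
            have : Equiv.swap 0 z ∈ P := by
              rw [hP]
              exact List.mem_flatMap.mpr ⟨z, Finset.mem_toList.mpr hzF, by simp⟩
            exact List.mem_append.mpr (Or.inr this)
        exact Subgroup.subset_closure hmem
    refine ⟨Equiv.swap 0 y * Equiv.swap 0 x, Subgroup.mul_mem _ (key y) (key x), ?_⟩
    simp [Equiv.swap_apply_right, Equiv.swap_apply_left]

theorem stmt0 {n : ℕ} [NeZero n] (π : Equiv.Perm (Fin n)) :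
    ∃ l : List (Equiv.Perm (Fin n)), l.length = n + numCycles π - 2 ∧
      IsStarFactorization π l ∧ IsTransitiveList l := by
  exact stmt0' π
end

section
/- If π ∈ S_n has m cycles (counting fixed points), then every transitive factorization of π into transpositions (of any type) has at least n+m-2 factors. -/
open Equiv Equiv.Perm

namespace HurwitzAux

variable {α : Type*}

/-- Relation obtained from a setoid by merging the classes of `a` and `b`. -/
def jr (s : Setoid α) (a b : α) (x y : α) : Prop :=
  s.r x y ∨ (s.r x a ∧ s.r b y) ∨ (s.r x b ∧ s.r a y)

theorem jr_equiv (s : Setoid α) (a b : α) : Equivalence (jr s a b) := by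
  obtain ⟨re, sy, tr⟩ := s.iseqv
  refine ⟨fun x => Or.inl (re x), ?_, ?_⟩
  · rintro x y (h | ⟨h1, h2⟩ | ⟨h1, h2⟩)
    · exact Or.inl (sy h)
    · exact Or.inr (Or.inr ⟨sy h2, sy h1⟩)
    · exact Or.inr (Or.inl ⟨sy h2, sy h1⟩)
  · rintro x y z (h | ⟨h1, h2⟩ | ⟨h1, h2⟩) (h' | ⟨h1', h2'⟩ | ⟨h1', h2'⟩)
    · exact Or.inl (tr h h')
    · exact Or.inr (Or.inl ⟨tr h h1', h2'⟩)
    · exact Or.inr (Or.inr ⟨tr h h1', h2'⟩)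
    · exact Or.inr (Or.inl ⟨h1, tr h2 h'⟩)
    · exact Or.inl (tr h1 (tr (sy (tr h2 h1')) h2'))
    · exact Or.inl (tr h1 h2')
    · exact Or.inr (Or.inr ⟨h1, tr h2 h'⟩)
    · exact Or.inl (tr h1 h2')
    · exact Or.inl (tr h1 (tr (sy (tr h2 h1')) h2'))

/-- The setoid with the classes of `a` and `b` merged. -/
def js (s : Setoid α) (a b : α) : Setoid α := ⟨jr s a b, jr_equiv s a b⟩

theorem jr_collapse {s : Setoid α} {a b : α} (hab : s.r a b) {x y : α}
    (h : jr s a b x y) : s.r x y := by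
  obtain ⟨re, sy, tr⟩ := s.iseqv
  rcases h with h | ⟨h1, h2⟩ | ⟨h1, h2⟩
  · exact h
  · exact tr h1 (tr hab h2)
  · exact tr h1 (tr (sy hab) h2)

theorem card_quot_le_of_le [Finite α] {s t : Setoid α} (h : ∀ x y, s.r x y → t.r x y) :
    Nat.card (Quotient t) ≤ Nat.card (Quotient s) := by
  apply Nat.card_le_card_of_surjective
    (Quotient.lift (fun x => (Quotient.mk t x)) fun x y hxy => Quotient.sound (h x y hxy))
  intro q
  induction q using Quotient.inductionOn with
  | h x => exact ⟨Quotient.mk s x, rfl⟩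

theorem card_quot_le_join_add_one [Finite α] (s : Setoid α) (a b : α) :
    Nat.card (Quotient s) ≤ Nat.card (Quotient (js s a b)) + 1 := by
  classical
  obtain ⟨re, sy, tr⟩ := s.iseqv
  have wd : ∀ x y, s.r x y →
      (if s.r x b then (Sum.inr () : Quotient (js s a b) ⊕ Unit)
        else Sum.inl (Quotient.mk (js s a b) x)) =
      (if s.r y b then Sum.inr () else Sum.inl (Quotient.mk (js s a b) y)) := by
    intro x y h
    by_cases hx : s.r x b
    · rw [if_pos hx, if_pos (tr (sy h) hx)]
    · rw [if_neg hx, if_neg fun hy => hx (tr h hy), Sum.inl.injEq]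
      exact Quotient.sound (Or.inl h)
  set f : Quotient s → Quotient (js s a b) ⊕ Unit :=
    Quotient.lift _ wd with hf
  have hinj : Function.Injective f := by
    intro q1 q2
    induction q1 using Quotient.inductionOn with
    | h x =>
    induction q2 using Quotient.inductionOn with
    | h y =>
    intro h
    rw [hf] at h
    simp only [Quotient.lift_mk] at h
    by_cases hx : s.r x b <;> by_cases hy : s.r y b
    · exact Quotient.sound (tr hx (sy hy))
    · rw [if_pos hx, if_neg hy] at h; exact absurd h (by simp)
    · rw [if_neg hx, if_pos hy] at h; exact absurd h (by simp)
    · rw [if_neg hx, if_neg hy, Sum.inl.injEq] at h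
      have := Quotient.exact h
      rcases this with h' | ⟨h1, h2⟩ | ⟨h1, h2⟩
      · exact Quotient.sound h'
      · exact absurd (sy h2) hy
      · exact absurd h1 hx
  calc Nat.card (Quotient s) ≤ Nat.card (Quotient (js s a b) ⊕ Unit) :=
        Nat.card_le_card_of_injective f hinj
    _ = Nat.card (Quotient (js s a b)) + 1 := by rw [Nat.card_sum]; simp

theorem card_join_lt [Finite α] (s : Setoid α) (a b : α) (hab : ¬s.r a b) :
    Nat.card (Quotient (js s a b)) < Nat.card (Quotient s) := by
  classical
  cases nonempty_fintype α
  rw [Nat.card_eq_fintype_card, Nat.card_eq_fintype_card]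
  apply Fintype.card_lt_of_surjective_not_injective
    (Quotient.lift (fun x => Quotient.mk (js s a b) x)
      (fun x y hxy => Quotient.sound (Or.inl hxy)))
  · intro q
    induction q using Quotient.inductionOn with
    | h x => exact ⟨Quotient.mk s x, rfl⟩
  · intro hinj
    have h1 : (Quotient.mk (js s a b) a) = Quotient.mk (js s a b) b :=
      Quotient.sound (Or.inr (Or.inl ⟨s.iseqv.refl a, s.iseqv.refl b⟩))
    have := hinj (a₁ := Quotient.mk s a) (a₂ := Quotient.mk s b) h1
    exact hab (Quotient.exact this)

theorem card_quot_eq_card (s : Setoid α) (h : ∀ x y, s.r x y ↔ x = y) :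
    Nat.card (Quotient s) = Nat.card α := by
  apply Nat.card_eq_of_bijective (Quotient.lift id fun x y hxy => (h x y).mp hxy)
  constructor
  · intro q1 q2
    induction q1 using Quotient.inductionOn with
    | h x =>
    induction q2 using Quotient.inductionOn with
    | h y =>
    intro hxy
    exact Quotient.sound ((h x y).mpr hxy)
  · intro x
    exact ⟨Quotient.mk s x, rfl⟩

theorem card_quot_eq_one (s : Setoid α) [Nonempty α] (h : ∀ x y, s.r x y) :
    Nat.card (Quotient s) = 1 := by
  have : Subsingleton (Quotient s) := by
    constructor
    intro q1 q2
    induction q1 using Quotient.inductionOn with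
    | h x =>
    induction q2 using Quotient.inductionOn with
    | h y =>
    exact Quotient.sound (h x y)
  have : Nonempty (Quotient s) := ⟨Quotient.mk s Classical.ofNonempty⟩
  exact Nat.card_unique

variable [DecidableEq α] [Fintype α]

/-- The setoid of being in the same cycle. -/
def cycSetoid (σ : Perm α) : Setoid α :=
  ⟨σ.SameCycle, ⟨fun x => SameCycle.refl σ x, SameCycle.symm, SameCycle.trans⟩⟩

/-- Fact G: same-cycle in `swap a b * σ` implies same-cycle in `σ` up to merging `a,b`. -/
theorem sameCycle_swap_mul_le (σ : Perm α) (a b : α) {x y : α}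
    (h : (swap a b * σ).SameCycle x y) : jr (cycSetoid σ) a b x y := by
  obtain ⟨i, -, -, hi⟩ := SameCycle.exists_pow_eq _ h
  subst hi
  have tr : ∀ {u v w : α}, jr (cycSetoid σ) a b u v → jr (cycSetoid σ) a b v w →
      jr (cycSetoid σ) a b u w := (jr_equiv (cycSetoid σ) a b).trans
  have step : ∀ z : α, jr (cycSetoid σ) a b x z → jr (cycSetoid σ) a b x ((swap a b * σ) z) := by
    intro z hz
    have hσ : jr (cycSetoid σ) a b x (σ z) :=
      tr hz (Or.inl ⟨1, by simp⟩)
    have hab : jr (cycSetoid σ) a b a b :=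
      Or.inr (Or.inl ⟨SameCycle.refl σ a, SameCycle.refl σ b⟩)
    rw [Perm.mul_apply]
    by_cases h1 : σ z = a
    · rw [h1, swap_apply_left]
      rw [h1] at hσ
      exact tr hσ hab
    · by_cases h2 : σ z = b
      · rw [h2, swap_apply_right]
        rw [h2] at hσ
        exact tr hσ ((jr_equiv (cycSetoid σ) a b).symm hab)
      · rw [swap_apply_of_ne_of_ne h1 h2]
        exact hσ
  clear h
  induction i with
  | zero => simp only [pow_zero, Perm.one_apply]; exact Or.inl (SameCycle.refl σ x)
  | succ k ih =>
    rw [pow_succ', Perm.mul_apply]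
    exact step _ ih

/-- If `a, b` are in different cycles of `σ` then `swap a b * σ` merges them. -/
theorem swap_mul_sameCycle_ab (σ : Perm α) {a b : α} (h : ¬σ.SameCycle a b) :
    (swap a b * σ).SameCycle b a := by
  have hex : ∃ j, 0 < j ∧ (σ ^ j) b = b := by
    refine ⟨orderOf σ, ?_, by rw [pow_orderOf_eq_one]; rfl⟩
    exact orderOf_pos σ
  classical
  set j := Nat.find hex with hjdef
  obtain ⟨hjpos, hjb⟩ : 0 < j ∧ (σ ^ j) b = b := Nat.find_spec hex
  have key : ∀ k, k < j → ((swap a b * σ) ^ k) b = (σ ^ k) b := by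
    intro k
    induction k with
    | zero => simp
    | succ m ih =>
      intro hm
      have hmj : m < j := Nat.lt_of_succ_lt hm
      rw [pow_succ', Perm.mul_apply, ih hmj, Perm.mul_apply, pow_succ', Perm.mul_apply]
      set w := σ ((σ ^ m) b) with hw
      have hwb : (σ ^ (m + 1)) b = w := by rw [pow_succ', Perm.mul_apply]
      have h1 : w ≠ a := by
        intro hwa
        exact h (SameCycle.symm ⟨(m + 1 : ℕ), by rw [zpow_natCast, hwb, hwa]⟩)
      have h2 : w ≠ b := by
        intro hwb'
        have : 0 < m + 1 ∧ (σ ^ (m + 1)) b = b := ⟨Nat.succ_pos m, by rw [hwb, hwb']⟩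
        have hle : Nat.find hex ≤ m + 1 := Nat.find_le this
        omega
      rw [swap_apply_of_ne_of_ne h1 h2]
  obtain ⟨m, hm⟩ : ∃ m, j = m + 1 := ⟨j - 1, by omega⟩
  refine ⟨(j : ℕ), ?_⟩
  rw [zpow_natCast, hm, pow_succ', Perm.mul_apply, key m (by omega), Perm.mul_apply]
  have : σ ((σ ^ m) b) = b := by rw [← Perm.mul_apply, ← pow_succ', ← hm, hjb]
  rw [this, swap_apply_right]


theorem card_cyc_quot (σ : Perm α) :
    Nat.card (Quotient (cycSetoid σ)) =
      σ.cycleFactorsFinset.card + (Finset.univ.filter fun x => σ x = x).card := by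
  classical
  have wd : ∀ x y : α, σ.SameCycle x y →
      (if h : σ x = x then (Sum.inr ⟨x, h⟩ : {c // c ∈ σ.cycleFactorsFinset} ⊕ {x : α // σ x = x})
        else Sum.inl ⟨σ.cycleOf x, cycleOf_mem_cycleFactorsFinset_iff.mpr (mem_support.mpr h)⟩) =
      (if h : σ y = y then Sum.inr ⟨y, h⟩
        else Sum.inl ⟨σ.cycleOf y, cycleOf_mem_cycleFactorsFinset_iff.mpr (mem_support.mpr h)⟩) := by
    intro x y hxy
    by_cases hx : σ x = x
    · obtain ⟨i, hi⟩ := hxy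
      have : y = x := by rw [← hi, zpow_apply_eq_self_of_apply_eq_self hx]
      subst this
      rfl
    · have hy : ¬σ y = y := by
        intro hy
        obtain ⟨i, hi⟩ := hxy.symm
        have : x = y := by rw [← hi, zpow_apply_eq_self_of_apply_eq_self hy]
        exact hx (this ▸ hy)
      rw [dif_neg hx, dif_neg hy, Sum.inl.injEq, Subtype.mk.injEq]
      exact hxy.cycleOf_eq
  set f : Quotient (cycSetoid σ) → {c // c ∈ σ.cycleFactorsFinset} ⊕ {x : α // σ x = x} :=
    Quotient.lift _ (fun x y h => wd x y h) with hf
  have hbij : Function.Bijective f := by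
    constructor
    · intro q1 q2
      induction q1 using Quotient.inductionOn with
      | h x =>
      induction q2 using Quotient.inductionOn with
      | h y =>
      intro h
      rw [hf] at h
      simp only [Quotient.lift_mk] at h
      by_cases hx : σ x = x <;> by_cases hy : σ y = y
      · rw [dif_pos hx, dif_pos hy, Sum.inr.injEq, Subtype.mk.injEq] at h
        subst h; rfl
      · rw [dif_pos hx, dif_neg hy] at h; exact absurd h (by simp)
      · rw [dif_neg hx, dif_pos hy] at h; exact absurd h (by simp)
      · rw [dif_neg hx, dif_neg hy, Sum.inl.injEq, Subtype.mk.injEq] at h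
        apply Quotient.sound
        have hy' : y ∈ (σ.cycleOf y).support :=
          mem_support_cycleOf_iff.mpr ⟨SameCycle.refl σ y, mem_support.mpr hy⟩
        rw [← h] at hy'
        exact (mem_support_cycleOf_iff.mp hy').1
    · rintro (⟨c, hc⟩ | ⟨x, hx⟩)
      · have hcyc : c.IsCycle := (mem_cycleFactorsFinset_iff.mp hc).1
        obtain ⟨x, hx1, -⟩ := hcyc
        have hxc : x ∈ c.support := mem_support.mpr hx1
        have hxs : σ x ≠ x := by
          rw [← (mem_cycleFactorsFinset_iff.mp hc).2 x hxc]
          exact hx1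
        refine ⟨Quotient.mk _ x, ?_⟩
        rw [hf]
        simp only [Quotient.lift_mk]
        rw [dif_neg hxs, Sum.inl.injEq, Subtype.mk.injEq]
        exact (cycle_is_cycleOf hxc hc).symm
      · refine ⟨Quotient.mk _ x, ?_⟩
        rw [hf]
        simp only [Quotient.lift_mk]
        rw [dif_pos hx]
  rw [Nat.card_eq_of_bijective f hbij, Nat.card_sum, Nat.card_eq_fintype_card,
    Nat.card_eq_fintype_card, Fintype.card_coe, Fintype.card_subtype]

set_option linter.unusedSectionVars false

/-- Case A: multiplying by any swap decreases the cycle count by at most 1. -/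
theorem card_cyc_swap_mul_ge (σ : Perm α) (a b : α) :
    Nat.card (Quotient (cycSetoid σ)) ≤ Nat.card (Quotient (cycSetoid (swap a b * σ))) + 1 := by
  have h1 : Nat.card (Quotient (cycSetoid σ)) ≤
      Nat.card (Quotient (js (cycSetoid σ) a b)) + 1 := card_quot_le_join_add_one _ a b
  have h2 : Nat.card (Quotient (js (cycSetoid σ) a b)) ≤
      Nat.card (Quotient (cycSetoid (swap a b * σ))) :=
    card_quot_le_of_le fun x y h => sameCycle_swap_mul_le σ a b h
  omega

/-- Case B: a swap joining two distinct cycles decreases the cycle count by exactly... at least 1. -/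
theorem card_cyc_swap_mul_lt (σ : Perm α) {a b : α} (hab : ¬σ.SameCycle a b) :
    Nat.card (Quotient (cycSetoid (swap a b * σ))) < Nat.card (Quotient (cycSetoid σ)) := by
  have htab : (swap a b * σ).SameCycle a b := (swap_mul_sameCycle_ab σ hab).symm
  -- jr (cycSetoid σ) a b  =  SameCycle (swap a b * σ)
  have hle1 : ∀ x y, (js (cycSetoid σ) a b).r x y → (cycSetoid (swap a b * σ)).r x y := by
    rintro x y hxy
    have hs : ∀ u v : α, σ.SameCycle u v → (swap a b * σ).SameCycle u v := by
      intro u v huv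
      have : (swap a b * (swap a b * σ)).SameCycle u v := by
        rwa [← mul_assoc, swap_mul_self, one_mul]
      rcases sameCycle_swap_mul_le (swap a b * σ) a b this with h | ⟨h1, h2⟩ | ⟨h1, h2⟩
      · exact h
      · exact (h1.trans htab).trans h2
      · exact (h1.trans htab.symm).trans h2
    rcases hxy with h | ⟨h1, h2⟩ | ⟨h1, h2⟩
    · exact hs x y h
    · exact ((hs x a h1).trans htab).trans (hs b y h2)
    · exact ((hs x b h1).trans htab.symm).trans (hs a y h2)
  have h2 : Nat.card (Quotient (cycSetoid (swap a b * σ))) ≤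
      Nat.card (Quotient (js (cycSetoid σ) a b)) := card_quot_le_of_le hle1
  have h3 : Nat.card (Quotient (js (cycSetoid σ) a b)) <
      Nat.card (Quotient (cycSetoid σ)) := card_join_lt _ a b hab
  omega

/-- Orbit setoid of the closure of a set of permutations. -/
def orbSetoid (S : Set (Perm α)) : Setoid α where
  r x y := ∃ g ∈ Subgroup.closure S, g x = y
  iseqv := by
    refine ⟨fun x => ⟨1, one_mem _, rfl⟩, ?_, ?_⟩
    · rintro x y ⟨g, hg, rfl⟩
      exact ⟨g⁻¹, inv_mem hg, by simp⟩
    · rintro x y z ⟨g, hg, rfl⟩ ⟨g', hg', rfl⟩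
      exact ⟨g' * g, mul_mem hg' hg, rfl⟩

theorem orbSetoid_insert_le (S : Set (Perm α)) (a b : α) {x y : α}
    (h : (orbSetoid (insert (swap a b) S)).r x y) : jr (orbSetoid S) a b x y := by
  obtain ⟨g, hg, rfl⟩ := h
  have tr : ∀ {u v w : α}, jr (orbSetoid S) a b u v → jr (orbSetoid S) a b v w →
      jr (orbSetoid S) a b u w := (jr_equiv (orbSetoid S) a b).trans
  have sy : ∀ {u v : α}, jr (orbSetoid S) a b u v → jr (orbSetoid S) a b v u :=
    (jr_equiv (orbSetoid S) a b).symm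
  induction hg using Subgroup.closure_induction generalizing x with
  | mem g hgS =>
    rcases hgS with rfl | hgS
    · by_cases hxa : x = a
      · rw [hxa, swap_apply_left]
        exact Or.inr (Or.inl ⟨(orbSetoid S).iseqv.refl a, (orbSetoid S).iseqv.refl b⟩)
      · by_cases hxb : x = b
        · rw [hxb, swap_apply_right]
          exact Or.inr (Or.inr ⟨(orbSetoid S).iseqv.refl b, (orbSetoid S).iseqv.refl a⟩)
        · rw [swap_apply_of_ne_of_ne hxa hxb]
          exact Or.inl ((orbSetoid S).iseqv.refl x)
    · exact Or.inl ⟨g, Subgroup.subset_closure hgS, rfl⟩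
  | one => exact Or.inl ((orbSetoid S).iseqv.refl x)
  | mul g g' hg hg' ihg ihg' =>
    have : (g * g') x = g (g' x) := rfl
    rw [this]
    exact tr ihg' (ihg (x := g' x))
  | inv g hg ihg =>
    have h2 := ihg (x := g⁻¹ x)
    rw [← Perm.mul_apply g g⁻¹ x, mul_inv_cancel, Perm.one_apply] at h2
    exact sy h2

theorem orbSetoid_mono {S T : Set (Perm α)} (h : S ⊆ T) {x y : α}
    (hxy : (orbSetoid S).r x y) : (orbSetoid T).r x y := by
  obtain ⟨g, hg, rfl⟩ := hxy
  exact ⟨g, Subgroup.closure_mono h hg, rfl⟩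

theorem sameCycle_le_orbSetoid {S : Set (Perm α)} {π : Perm α}
    (hπ : π ∈ Subgroup.closure S) {x y : α} (h : π.SameCycle x y) : (orbSetoid S).r x y := by
  obtain ⟨i, hi⟩ := h
  exact ⟨π ^ i, zpow_mem hπ i, hi⟩

theorem orbit_le_of_mem_orbit (S : Set (Perm α)) {a b : α} (hab : (orbSetoid S).r a b) :
    Nat.card (Quotient (orbSetoid S)) ≤
      Nat.card (Quotient (orbSetoid (insert (swap a b) S))) :=
  card_quot_le_of_le fun _ _ h => jr_collapse hab (orbSetoid_insert_le S a b h)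

theorem orbit_le_add_one (S : Set (Perm α)) (a b : α) :
    Nat.card (Quotient (orbSetoid S)) ≤
      Nat.card (Quotient (orbSetoid (insert (swap a b) S))) + 1 := by
  have h1 : Nat.card (Quotient (orbSetoid S)) ≤
      Nat.card (Quotient (js (orbSetoid S) a b)) + 1 := card_quot_le_join_add_one _ a b
  have h2 : Nat.card (Quotient (js (orbSetoid S) a b)) ≤
      Nat.card (Quotient (orbSetoid (insert (swap a b) S))) :=
    card_quot_le_of_le fun x y h => orbSetoid_insert_le S a b h
  omega


end HurwitzAux


namespace HurwitzAux

theorem numCycles_eq_card {n : ℕ} (σ : Perm (Fin n)) :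
    numCycles σ = Nat.card (Quotient (cycSetoid σ)) := by
  rw [card_cyc_quot, numCycles]
  congr 1
  rw [cycleType]
  simp

theorem main_induction {n : ℕ} (l : List (Perm (Fin n))) (hswap : ∀ τ ∈ l, τ.IsSwap) :
    n + numCycles l.prod ≤ l.length + 2 * Nat.card (Quotient (orbSetoid {τ | τ ∈ l})) := by
  induction l with
  | nil =>
    have h1 : numCycles (List.prod ([] : List (Perm (Fin n)))) = n := by
      rw [List.prod_nil, numCycles]
      simp [cycleType_one]
    have h2 : Nat.card (Quotient (orbSetoid {τ | τ ∈ ([] : List (Perm (Fin n)))})) = n := by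
      rw [card_quot_eq_card _ ?_, Nat.card_eq_fintype_card, Fintype.card_fin]
      intro x y
      constructor
      · rintro ⟨g, hg, rfl⟩
        have : {τ : Perm (Fin n) | τ ∈ ([] : List (Perm (Fin n)))} = ∅ := by ext τ; simp
        rw [this, Subgroup.closure_empty, Subgroup.mem_bot] at hg
        rw [hg]; rfl
      · rintro rfl
        exact (orbSetoid _).iseqv.refl x
    rw [h1, h2]
    simp
    omega
  | cons τ l ih =>
    obtain ⟨a, b, hab, rfl⟩ := hswap τ List.mem_cons_self
    have hswap' : ∀ τ' ∈ l, τ'.IsSwap := fun τ' h => hswap τ' (List.mem_cons_of_mem _ h)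
    have ih' := ih hswap'
    have hset : {τ' : Perm (Fin n) | τ' ∈ swap a b :: l} =
        insert (swap a b) {τ' : Perm (Fin n) | τ' ∈ l} := by
      ext τ'; simp [List.mem_cons]
    rw [List.prod_cons, hset]
    by_cases horb : (orbSetoid {τ' : Perm (Fin n) | τ' ∈ l}).r a b
    · -- same orbit: orbits stay, cycles change by at most one
      have hc : numCycles (swap a b * l.prod) ≤ numCycles l.prod + 1 := by
        rw [numCycles_eq_card, numCycles_eq_card]
        have := card_cyc_swap_mul_ge (swap a b * l.prod) a b
        rwa [← mul_assoc, swap_mul_self, one_mul] at this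
      have ho := orbit_le_of_mem_orbit {τ' : Perm (Fin n) | τ' ∈ l} horb
      simp only [List.length_cons]
      omega
    · -- different orbits: cycles merge
      have hprodmem : l.prod ∈ Subgroup.closure {τ' : Perm (Fin n) | τ' ∈ l} :=
        Subgroup.list_prod_mem _ fun τ' h => Subgroup.subset_closure h
      have hnsc : ¬(l.prod).SameCycle a b := fun h =>
        horb (sameCycle_le_orbSetoid hprodmem h)
      have hc : numCycles (swap a b * l.prod) < numCycles l.prod := by
        rw [numCycles_eq_card, numCycles_eq_card]
        exact card_cyc_swap_mul_lt l.prod hnsc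
      have ho := orbit_le_add_one {τ' : Perm (Fin n) | τ' ∈ l} a b
      simp only [List.length_cons]
      omega

end HurwitzAux

theorem stmt1 {n : ℕ} (hn : 1 ≤ n) (π : Equiv.Perm (Fin n))
    (l : List (Equiv.Perm (Fin n)))
    (hswap : ∀ τ ∈ l, τ.IsSwap) (hprod : l.prod = π)
    (htrans : IsTransitiveList l) :
    n + numCycles π - 2 ≤ l.length := by
  subst hprod
  have key := HurwitzAux.main_induction l hswap
  have hone : Nat.card (Quotient (HurwitzAux.orbSetoid {τ | τ ∈ l})) = 1 := by
    haveI : Nonempty (Fin n) := ⟨⟨0, hn⟩⟩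
    exact HurwitzAux.card_quot_eq_one _ fun x y => htrans x y
  rw [hone] at key
  omega
end

section
/- If π ∈ S_n has a fixed point a ≠ 1, then no star factorization of π of minimal length contains the factor (1 a); more precisely, if π(a)=a with a ≠ 1 and (τ_1,...,τ_r) is a star factorization of π of minimal length among all star factorizations of π, then no τ_i equals (1 a). -/
section Aux

variable {α : Type*} [DecidableEq α]

lemma swap_aux1 (u v w : α) (h1 : u ≠ v) (h2 : u ≠ w) (h3 : v ≠ w) :
    Equiv.swap u v * Equiv.swap u w = Equiv.swap u w * Equiv.swap v w := by
  ext z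
  simp only [Equiv.Perm.mul_apply, Equiv.swap_apply_def]
  split_ifs <;> simp_all

lemma swap_aux1' (u v w : α) (h1 : u ≠ v) (h2 : u ≠ w) (h3 : v ≠ w) :
    Equiv.swap u v * Equiv.swap u w = Equiv.swap v w * Equiv.swap u v := by
  ext z
  simp only [Equiv.Perm.mul_apply, Equiv.swap_apply_def]
  split_ifs <;> simp_all

lemma swap_aux2 (p q r s : α) (h1 : p ≠ r) (h2 : p ≠ s) (h3 : q ≠ r) (h4 : q ≠ s) :
    Equiv.swap p q * Equiv.swap r s = Equiv.swap r s * Equiv.swap p q := by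
  ext z
  simp only [Equiv.Perm.mul_apply, Equiv.swap_apply_def]
  split_ifs <;> simp_all

lemma last_split (c : α) : ∀ l : List α, c ∈ l → ∃ u w, l = u ++ c :: w ∧ c ∉ w := by
  intro l
  induction l with
  | nil => intro h; simp at h
  | cons b t ih =>
    intro h
    by_cases hc : c ∈ t
    · obtain ⟨u, w, rfl, hw⟩ := ih hc
      exact ⟨b :: u, w, rfl, hw⟩
    · have hb : c = b := by
        rcases List.mem_cons.mp h with h | h
        · exact h
        · exact absurd h hc
      exact ⟨[], t, by rw [hb]; rfl, hc⟩

end Aux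

section StarLemmas

variable {n : ℕ} [NeZero n]

/-- The "wandering" permutation: `swap 0 a` when the tracked point is `0`,
otherwise `swap a x`. -/
def wand (a x : Fin n) : Equiv.Perm (Fin n) :=
  if x = 0 then Equiv.swap 0 a else Equiv.swap a x

lemma fixa (a : Fin n) (ha : a ≠ 0) :
    ∀ w : List (Equiv.Perm (Fin n)), IsStarList w → (∀ τ ∈ w, τ ≠ Equiv.swap 0 a) →
    w.prod a = a := by
  intro w
  induction w with
  | nil => simp
  | cons b t ih =>
    intro hstar hne
    obtain ⟨i, hi0, rfl⟩ := hstar _ (List.mem_cons_self)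
    have hia : i ≠ a := by
      rintro rfl; exact hne _ (List.mem_cons_self) rfl
    rw [List.prod_cons, Equiv.Perm.mul_apply,
      ih (fun τ h => hstar τ (List.mem_cons_of_mem _ h))
        (fun τ h => hne τ (List.mem_cons_of_mem _ h)),
      Equiv.swap_apply_of_ne_of_ne ha (Ne.symm hia)]

lemma traj (a : Fin n) (ha : a ≠ 0) :
    ∀ u : List (Equiv.Perm (Fin n)), IsStarList u → ∀ x : Fin n, x ≠ a → u.prod x = a →
    ∃ p q, u = p ++ Equiv.swap 0 a :: q ∧ IsStarList p ∧ IsStarList q ∧ q.prod x = 0 := by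
  intro u
  induction u with
  | nil =>
    intro _ x hx hxa
    simp at hxa
    exact absurd hxa hx
  | cons b t ih =>
    intro hstar x hx hxa
    obtain ⟨i, hi0, rfl⟩ := hstar _ (List.mem_cons_self)
    have htstar : IsStarList t := fun τ h => hstar τ (List.mem_cons_of_mem _ h)
    rw [List.prod_cons, Equiv.Perm.mul_apply] at hxa
    by_cases hia : i = a
    · subst hia
      have ht0 : t.prod x = 0 := by
        have := congrArg (Equiv.swap 0 i) hxa
        rwa [Equiv.swap_apply_self, Equiv.swap_apply_right] at this
      exact ⟨[], t, rfl, (by intro τ h; simp at h), htstar, ht0⟩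
    · have hta : t.prod x = a := by
        have := congrArg (Equiv.swap 0 i) hxa
        rwa [Equiv.swap_apply_self,
          Equiv.swap_apply_of_ne_of_ne ha (fun h => hia h.symm)] at this
      obtain ⟨p, q, rfl, hp, hq, hq0⟩ := ih htstar x hx hta
      exact ⟨Equiv.swap 0 i :: p, q, rfl,
        (by
          intro τ h
          rcases List.mem_cons.mp h with h | h
          · exact ⟨i, hi0, h⟩
          · exact hp τ h), hq, hq0⟩

lemma push (a : Fin n) (ha : a ≠ 0) :
    ∀ q : List (Equiv.Perm (Fin n)), IsStarList q → ∀ x : Fin n, x ≠ a →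
    (∃ r, IsStarList r ∧ r.length < q.length ∧ wand a x * q.prod = r.prod) ∨
    (∃ r y, IsStarList r ∧ y ≠ a ∧ r.length = q.length ∧
      wand a x * q.prod = r.prod * wand a y ∧ q.prod y = x) := by
  intro q
  induction q with
  | nil =>
    intro _ x hx
    right
    exact ⟨[], x, (by intro τ h; simp at h), hx, rfl, by simp, by simp⟩
  | cons b q ih =>
    intro hbq x hx
    obtain ⟨i, hi0, rfl⟩ := hbq _ (List.mem_cons_self)
    have hq : IsStarList q := fun τ h => hbq τ (List.mem_cons_of_mem _ h)
    have star_cons : ∀ r : List (Equiv.Perm (Fin n)), IsStarList r →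
        IsStarList (Equiv.swap 0 i :: r) := by
      intro r hr τ h
      rcases List.mem_cons.mp h with h | h
      · exact ⟨i, hi0, h⟩
      · exact hr τ h
    rw [List.prod_cons]
    by_cases hx0 : x = 0
    · subst hx0
      rw [show wand a 0 = Equiv.swap 0 a from if_pos rfl]
      by_cases hia : i = a
      · subst hia
        left
        refine ⟨q, hq, by simp, ?_⟩
        rw [← mul_assoc, Equiv.swap_mul_self, one_mul]
      · have key : Equiv.swap 0 a * Equiv.swap 0 i = Equiv.swap 0 i * wand a i := by
          rw [show wand a i = Equiv.swap a i from if_neg hi0]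
          exact swap_aux1 0 a i (Ne.symm ha) (Ne.symm hi0) (fun h => hia h.symm)
        rcases ih hq i hia with ⟨r, hr, hlen, heq⟩ | ⟨r, y, hr, hy, hlen, heq, hval⟩
        · left
          refine ⟨Equiv.swap 0 i :: r, star_cons r hr, by simpa using hlen, ?_⟩
          rw [← mul_assoc, key, mul_assoc, heq, List.prod_cons]
        · right
          refine ⟨Equiv.swap 0 i :: r, y, star_cons r hr, hy, by simpa using hlen, ?_, ?_⟩
          · rw [← mul_assoc, key, mul_assoc, heq, List.prod_cons, mul_assoc]
          · rw [Equiv.Perm.mul_apply, hval, Equiv.swap_apply_right]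
    · rw [show wand a x = Equiv.swap a x from if_neg hx0]
      by_cases hix : i = x
      · have key : Equiv.swap a x * Equiv.swap 0 i = Equiv.swap 0 i * wand a 0 := by
          rw [hix, show wand a 0 = Equiv.swap 0 a from if_pos rfl]
          have h5 := swap_aux1 x a 0 hx hx0 ha
          rw [Equiv.swap_comm x a, Equiv.swap_comm x 0, Equiv.swap_comm a 0] at h5
          exact h5
        rcases ih hq 0 (Ne.symm ha) with ⟨r, hr, hlen, heq⟩ | ⟨r, y, hr, hy, hlen, heq, hval⟩
        · left
          refine ⟨Equiv.swap 0 i :: r, star_cons r hr, by simpa using hlen, ?_⟩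
          rw [← mul_assoc, key, mul_assoc, heq, List.prod_cons]
        · right
          refine ⟨Equiv.swap 0 i :: r, y, star_cons r hr, hy, by simpa using hlen, ?_, ?_⟩
          · rw [← mul_assoc, key, mul_assoc, heq, List.prod_cons, mul_assoc]
          · rw [Equiv.Perm.mul_apply, hval, Equiv.swap_apply_left]
            exact hix
      · by_cases hia : i = a
        · have key : Equiv.swap a x * Equiv.swap 0 i = Equiv.swap 0 x * wand a x := by
            rw [hia, show wand a x = Equiv.swap a x from if_neg hx0]
            have h5 := swap_aux1' a x 0 (fun h => hx h.symm) ha hx0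
            rw [Equiv.swap_comm a 0, Equiv.swap_comm x 0] at h5
            exact h5
          rcases ih hq x hx with ⟨r, hr, hlen, heq⟩ | ⟨r, y, hr, hy, hlen, heq, hval⟩
          · left
            refine ⟨Equiv.swap 0 x :: r, ?_, by simpa using hlen, ?_⟩
            · intro τ h
              rcases List.mem_cons.mp h with h | h
              · exact ⟨x, hx0, h⟩
              · exact hr τ h
            · rw [← mul_assoc, key, mul_assoc, heq, List.prod_cons]
          · right
            refine ⟨Equiv.swap 0 x :: r, y, ?_, hy, by simpa using hlen, ?_, ?_⟩
            · intro τ h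
              rcases List.mem_cons.mp h with h | h
              · exact ⟨x, hx0, h⟩
              · exact hr τ h
            · rw [← mul_assoc, key, mul_assoc, heq, List.prod_cons, mul_assoc]
            · rw [Equiv.Perm.mul_apply, hval, hia,
                Equiv.swap_apply_of_ne_of_ne hx0 hx]
        · have key : Equiv.swap a x * Equiv.swap 0 i = Equiv.swap 0 i * wand a x := by
            rw [show wand a x = Equiv.swap a x from if_neg hx0]
            exact swap_aux2 a x 0 i ha (fun h => hia h.symm) hx0 (fun h => hix h.symm)
          rcases ih hq x hx with ⟨r, hr, hlen, heq⟩ | ⟨r, y, hr, hy, hlen, heq, hval⟩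
          · left
            refine ⟨Equiv.swap 0 i :: r, star_cons r hr, by simpa using hlen, ?_⟩
            rw [← mul_assoc, key, mul_assoc, heq, List.prod_cons]
          · right
            refine ⟨Equiv.swap 0 i :: r, y, star_cons r hr, hy, by simpa using hlen, ?_, ?_⟩
            · rw [← mul_assoc, key, mul_assoc, heq, List.prod_cons, mul_assoc]
            · rw [Equiv.Perm.mul_apply, hval,
                Equiv.swap_apply_of_ne_of_ne hx0 (fun h => hix h.symm)]

end StarLemmas

theorem stmt2 {n : ℕ} [NeZero n] (π : Equiv.Perm (Fin n)) (a : Fin n)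
    (ha : a ≠ 0) (hfix : π a = a)
    (l : List (Equiv.Perm (Fin n)))
    (hl : IsStarFactorization π l)
    (hmin : ∀ l', IsStarFactorization π l' → l.length ≤ l'.length) :
    ∀ τ ∈ l, τ ≠ Equiv.swap 0 a := by
  obtain ⟨hstar, hprod⟩ := hl
  intro τ hτ heq
  rw [heq] at hτ
  obtain ⟨u, w, hlw, hwn⟩ := last_split _ _ hτ
  have hustar : IsStarList u := by
    intro τ' h
    exact hstar τ' (by rw [hlw]; exact List.mem_append_left _ h)
  have hwstar : IsStarList w := by
    intro τ' h
    exact hstar τ' (by rw [hlw]; exact List.mem_append_right _ (List.mem_cons_of_mem _ h))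
  have hwa : w.prod a = a :=
    fixa a ha w hwstar (fun τ' h h2 => hwn (h2 ▸ h))
  have hu0 : u.prod 0 = a := by
    have h1 : π a = u.prod (Equiv.swap 0 a (w.prod a)) := by
      rw [← hprod, hlw]
      simp [List.prod_append, List.prod_cons, Equiv.Perm.mul_apply]
    rw [hwa, Equiv.swap_apply_right, hfix] at h1
    exact h1.symm
  obtain ⟨p, q, hu2, hpstar, hqstar, hq0⟩ := traj a ha u hustar 0 (Ne.symm ha) hu0
  rw [hu2] at hlw
  rcases push a ha q hqstar 0 (Ne.symm ha) with
    ⟨r, hr, hlen, heq2⟩ | ⟨r, y, hr, hy, hlen, heq2, hval⟩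
  · rw [show wand a 0 = Equiv.swap 0 a from if_pos rfl] at heq2
    have hfac : IsStarFactorization π (p ++ r ++ Equiv.swap 0 a :: w) := by
      constructor
      · intro τ' h
        rcases List.mem_append.mp h with h | h
        · rcases List.mem_append.mp h with h | h
          · exact hpstar τ' h
          · exact hr τ' h
        · rcases List.mem_cons.mp h with h | h
          · exact ⟨a, ha, h⟩
          · exact hwstar τ' h
      · rw [← hprod, hlw]
        simp only [List.prod_append, List.prod_cons, ← heq2, mul_assoc]
    have hle := hmin _ hfac
    rw [hlw] at hle
    simp only [List.length_append, List.length_cons] at hle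
    omega
  · rw [show wand a 0 = Equiv.swap 0 a from if_pos rfl] at heq2
    have hy0 : y = 0 := q.prod.injective (hval.trans hq0.symm)
    subst hy0
    rw [show wand a 0 = Equiv.swap 0 a from if_pos rfl] at heq2
    have hr2 : Equiv.swap 0 a * (q.prod * Equiv.swap 0 a) = r.prod := by
      have h2 := congrArg (fun g => g * Equiv.swap 0 a) heq2
      simpa [mul_assoc, Equiv.swap_mul_self] using h2
    have hfac : IsStarFactorization π (p ++ r ++ w) := by
      constructor
      · intro τ' h
        rcases List.mem_append.mp h with h | h
        · rcases List.mem_append.mp h with h | h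
          · exact hpstar τ' h
          · exact hr τ' h
        · exact hwstar τ' h
      · rw [← hprod, hlw]
        simp only [List.prod_append, List.prod_cons, ← hr2, mul_assoc]
    have hle := hmin _ hfac
    rw [hlw] at hle
    simp only [List.length_append, List.length_cons] at hle
    omega
end

section
/- Let (τ_1,...,τ_r) be a minimal transitive star factorization of π ∈ S_n, and let σ = (a_1 a_2 ... a_ℓ) be a cycle of π not containing the symbol 1. Then the leftmost factor among τ_1,...,τ_r meeting σ (i.e., of the form (1 a_j) for some j) occurs at least twice in the factorization. -/
open Equiv Equiv.Perm

private lemma prod_apply_of_fixed {n : ℕ} (m : List (Equiv.Perm (Fin n))) (a : Fin n)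
    (h : ∀ τ ∈ m, τ a = a) : m.prod a = a := by
  induction m with
  | nil => simp
  | cons τ t ih =>
      simp only [List.prod_cons, Equiv.Perm.mul_apply]
      rw [ih (fun τ' hτ' => h τ' (List.mem_cons_of_mem _ hτ')), h τ List.mem_cons_self]

private lemma prod_preserve_compl {n : ℕ} (S : Finset (Fin n)) (m : List (Equiv.Perm (Fin n)))
    (h : ∀ τ ∈ m, ∀ x, x ∉ S → τ x ∉ S) : ∀ x, x ∉ S → m.prod x ∉ S := by
  induction m with
  | nil => simpa using fun x hx => hx
  | cons τ t ih =>
      intro x hx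
      simp only [List.prod_cons, Equiv.Perm.mul_apply]
      exact h τ List.mem_cons_self _
        (ih (fun τ' hτ' => h τ' (List.mem_cons_of_mem _ hτ')) x hx)



/-- A minimal transitive star factorization: transitive of length `n + m - 2`. -/
def IsMinimalTransitiveStarFactorization {n : ℕ} [NeZero n] (π : Equiv.Perm (Fin n))
    (l : List (Equiv.Perm (Fin n))) : Prop :=
  IsStarFactorization π l ∧ IsTransitiveList l ∧ l.length = n + numCycles π - 2

theorem stmt4 {n : ℕ} [NeZero n] (π σ : Equiv.Perm (Fin n))
    (l : List (Equiv.Perm (Fin n)))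
    (hl : IsMinimalTransitiveStarFactorization π l)
    (hσ : σ ∈ π.cycleFactorsFinset) (h1 : (0 : Fin n) ∉ σ.support)
    (k : Fin l.length)
    (hk : ∃ i ∈ σ.support, l.get k = Equiv.swap 0 i)
    (hleft : ∀ j : Fin l.length, j < k → ¬ ∃ i ∈ σ.support, l.get j = Equiv.swap 0 i) :
    2 ≤ l.count (l.get k) := by
  obtain ⟨⟨hstar, hprod⟩, -, -⟩ := hl
  obtain ⟨a, haS, hka⟩ := hk
  have ha0 : a ≠ 0 := fun h => h1 (h ▸ haS)
  -- π a = σ a ∈ σ.support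
  have hπa : π a = σ a := by
    rw [cycle_is_cycleOf haS hσ, Equiv.Perm.cycleOf_apply_self]
  have hπaS : π a ∈ σ.support := by
    rw [hπa]; exact Equiv.Perm.apply_mem_support.mpr haS
  -- decompose l
  by_contra hcount
  push_neg at hcount
  obtain ⟨τk, hτk⟩ : ∃ τ, l.get k = τ := ⟨_, rfl⟩
  rw [hτk] at hka hcount
  have hmem : τk ∈ l := hτk ▸ l.get_mem _
  have hc1 : l.count τk = 1 := by
    have := List.count_pos_iff.mpr hmem
    omega
  set l₁ := l.take k with hl₁
  set l₂ := l.drop (k + 1) with hl₂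
  have hsplit : l = l₁ ++ τk :: l₂ := by
    conv_lhs => rw [← List.take_append_drop (k : ℕ) l]
    congr 1
    rw [List.drop_eq_getElem_cons k.isLt, ← List.get_eq_getElem, hτk]
  have hcountsplit : (l₁ ++ τk :: l₂).count τk = l₁.count τk + 1 + l₂.count τk := by
    simp [List.count_append, List.count_cons]
    ring
  rw [hsplit] at hc1
  rw [hcountsplit] at hc1
  have hnot₂ : τk ∉ l₂ := by
    intro h
    have := List.count_pos_iff.mpr h
    omega
  -- no factor of l₁ meets σ.support
  have hl₁prop : ∀ τ ∈ l₁, ∃ i : Fin n, i ≠ 0 ∧ i ∉ σ.support ∧ τ = Equiv.swap 0 i := by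
    intro τ hτ
    have hτl : τ ∈ l := List.take_subset _ _ hτ
    obtain ⟨i, hi0, hτi⟩ := hstar τ hτl
    rw [hl₁, List.mem_take_iff_getElem] at hτ
    obtain ⟨j, hj, hτj⟩ := hτ
    have hjlt : j < l.length := lt_of_lt_of_le (lt_min_iff.mp hj).1 (le_of_lt k.isLt)
    refine ⟨i, hi0, fun hiS => ?_, hτi⟩
    exact hleft ⟨j, hjlt⟩ (by simpa [Fin.lt_def] using (lt_min_iff.mp hj).1) ⟨i, hiS, by simp only [List.get_eq_getElem, hτj]; exact hτi⟩
  -- l₂ fixes a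
  have hl₂a : l₂.prod a = a := by
    apply prod_apply_of_fixed
    intro τ hτ
    obtain ⟨i, hi0, hτi⟩ := hstar τ (by rw [hsplit]; exact List.mem_append_right _ (List.mem_cons_of_mem _ hτ))
    have hia : i ≠ a := by
      intro h
      exact hnot₂ (by rwa [hka, ← h, ← hτi])
    rw [hτi]
    exact Equiv.swap_apply_of_ne_of_ne ha0 (Ne.symm hia)
  -- compute π a
  have hπa' : π a = l₁.prod 0 := by
    rw [← hprod, hsplit]
    simp only [List.prod_append, List.prod_cons, Equiv.Perm.mul_apply]
    rw [hl₂a, hka, Equiv.swap_apply_right]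
  have : π a ∉ σ.support := by
    rw [hπa']
    apply prod_preserve_compl σ.support l₁ _ 0 h1
    intro τ hτ x hx
    obtain ⟨i, hi0, hiS, hτi⟩ := hl₁prop τ hτ
    rw [hτi]
    rcases eq_or_ne x 0 with rfl | hx0
    · rwa [Equiv.swap_apply_left]
    rcases eq_or_ne x i with rfl | hxi
    · rwa [Equiv.swap_apply_right]
    · rwa [Equiv.swap_apply_of_ne_of_ne hx0 hxi]
  exact this hπaS
end

section
/- Let (τ_1,...,τ_r) be a minimal transitive star factorization of π ∈ S_n whose cycles are σ_1,...,σ_m with σ_1 the cycle containing 1 (of length ℓ_1, possibly 1) and σ_i of length ℓ_i for i ≥ 2. Then for each i ≥ 2, exactly ℓ_i + 1 of the factors meet σ_i, and exactly ℓ_1 − 1 factors meet σ_1; moreover r = n + m − 2. -/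
section StarHelpers

open Equiv List

variable {n : ℕ} [NeZero n]

lemma swap_zero_inj {i j : Fin n} (h : Equiv.swap 0 i = Equiv.swap 0 j) : i = j := by
  have := congrArg (fun e : Equiv.Perm (Fin n) => e 0) h
  simpa using this

lemma star_tail {τ : Equiv.Perm (Fin n)} {t : List (Equiv.Perm (Fin n))}
    (hs : IsStarList (τ :: t)) : IsStarList t := fun x hx => hs x (mem_cons_of_mem _ hx)

lemma prod_fix_of_not_mem {l : List (Equiv.Perm (Fin n))} (hs : IsStarList l) {j : Fin n}
    (hj : j ≠ 0) (hmem : Equiv.swap 0 j ∉ l) : l.prod j = j := by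
  induction l with
  | nil => simp
  | cons τ t ih =>
    obtain ⟨i, hi0, rfl⟩ := hs _ mem_cons_self
    have h1 : Equiv.swap 0 j ∉ t := fun h => hmem (mem_cons_of_mem _ h)
    have hij : j ≠ i := by
      rintro rfl; exact hmem mem_cons_self
    rw [prod_cons, Equiv.Perm.mul_apply, ih (star_tail hs) h1,
      Equiv.swap_apply_of_ne_of_ne hj hij]

lemma mem_of_prod_move {l : List (Equiv.Perm (Fin n))} (hs : IsStarList l) {j : Fin n}
    (hj : j ≠ 0) (hmove : l.prod j ≠ j) : Equiv.swap 0 j ∈ l := by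
  by_contra h
  exact hmove (prod_fix_of_not_mem hs hj h)

lemma indexOf_lt_of_mem_take {α : Type*} [DecidableEq α] {x : α} {m : ℕ} :
    ∀ {l : List α}, x ∈ l.take m → l.idxOf x < m := by
  intro l
  induction l generalizing m with
  | nil => simp
  | cons a t ih =>
    intro hx
    cases m with
    | zero => simp at hx
    | succ m =>
      rw [take_succ_cons, mem_cons] at hx
      rcases hx with rfl | hx
      · simp [List.idxOf_cons_self]
      · rw [idxOf_cons]
        cases h : (a == x) <;> simp [h]
        exact ih hx

lemma count_one_split {l : List (Equiv.Perm (Fin n))} {τ : Equiv.Perm (Fin n)}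
    (hc : l.count τ = 1) :
    τ ∉ l.take (l.idxOf τ) ∧ τ ∉ l.drop (l.idxOf τ + 1) ∧
      l = l.take (l.idxOf τ) ++ τ :: l.drop (l.idxOf τ + 1) := by
  have hmem : τ ∈ l := List.count_pos_iff.1 (by omega)
  have hlt : l.idxOf τ < l.length := List.idxOf_lt_length_iff.2 hmem
  have hdec : l = l.take (l.idxOf τ) ++ τ :: l.drop (l.idxOf τ + 1) := by
    conv_lhs => rw [← List.take_append_drop (l.idxOf τ) l]
    rw [List.drop_eq_getElem_cons hlt]
    congr 2
    have := List.idxOf_get hlt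
    simpa [List.get_eq_getElem] using this
  have hA : τ ∉ l.take (l.idxOf τ) := fun h => by
    have := indexOf_lt_of_mem_take h; omega
  refine ⟨hA, ?_, hdec⟩
  intro hB
  have := hc
  rw [hdec] at this
  rw [List.count_append, List.count_cons_self] at this
  have h1 : 0 < (l.drop (l.idxOf τ + 1)).count τ := List.count_pos_iff.2 hB
  omega

lemma star_of_sublist {l l' : List (Equiv.Perm (Fin n))} (hs : IsStarList l)
    (h : ∀ τ ∈ l', τ ∈ l) : IsStarList l' := fun τ hτ => hs τ (h τ hτ)

lemma swap_prod_mem_take {l : List (Equiv.Perm (Fin n))} (hs : IsStarList l) {i : Fin n}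
    (hi : i ≠ 0) (hpi : l.prod i ≠ 0) (hc : l.count (Equiv.swap 0 i) = 1) :
    Equiv.swap 0 (l.prod i) ∈ l.take (l.idxOf (Equiv.swap 0 i)) := by
  obtain ⟨hA, hB, hdec⟩ := count_one_split hc
  set A := l.take (l.idxOf (Equiv.swap 0 i)) with hAdef
  set B := l.drop (l.idxOf (Equiv.swap 0 i) + 1) with hBdef
  by_contra hnA
  have hsA : IsStarList A := star_of_sublist hs fun τ h => List.mem_of_mem_take h
  have hsB : IsStarList B := star_of_sublist hs fun τ h => List.mem_of_mem_drop h
  have h1 : B.prod i = i := prod_fix_of_not_mem hsB hi hB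
  have h2 : A.prod (l.prod i) = l.prod i := prod_fix_of_not_mem hsA hpi hnA
  have h3 : l.prod i = A.prod 0 := by
    conv_lhs => rw [hdec]
    rw [List.prod_append, List.prod_cons]
    simp only [Equiv.Perm.mul_apply, h1, Equiv.swap_apply_right]
  rw [h3] at h2
  have h4 : A.prod 0 = (0 : Fin n) := (A.prod.injective h2.symm).symm
  exact hpi (h3.trans h4)

lemma two_le_count_of_fixed {l : List (Equiv.Perm (Fin n))} (hs : IsStarList l) {i : Fin n}
    (hi : i ≠ 0) (hfix : l.prod i = i) (hmem : Equiv.swap 0 i ∈ l) :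
    2 ≤ l.count (Equiv.swap 0 i) := by
  have h1 : 0 < l.count (Equiv.swap 0 i) := List.count_pos_iff.2 hmem
  by_contra hlt
  have hc : l.count (Equiv.swap 0 i) = 1 := by omega
  have hd := swap_prod_mem_take hs hi (by rw [hfix]; exact hi) hc
  rw [hfix] at hd
  exact (count_one_split hc).1 hd

lemma card_succ_le_sum_count {l : List (Equiv.Perm (Fin n))} (hs : IsStarList l)
    (S : Finset (Fin n)) (h0 : (0 : Fin n) ∉ S) (hne : S.Nonempty)
    (hmapsto : ∀ i ∈ S, l.prod i ∈ S) (hmove : ∀ i ∈ S, l.prod i ≠ i) :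
    S.card + 1 ≤ ∑ i ∈ S, l.count (Equiv.swap 0 i) := by
  have hne0 : ∀ i ∈ S, i ≠ 0 := fun i hiS h => h0 (h ▸ hiS)
  have hone : ∀ i ∈ S, 1 ≤ l.count (Equiv.swap 0 i) := fun i hiS =>
    List.count_pos_iff.2 (mem_of_prod_move hs (hne0 i hiS) (hmove i hiS))
  have hge : S.card ≤ ∑ i ∈ S, l.count (Equiv.swap 0 i) := by
    calc S.card = ∑ _i ∈ S, 1 := by simp
    _ ≤ _ := Finset.sum_le_sum hone
  by_contra hlt
  have hsum : ∑ i ∈ S, l.count (Equiv.swap 0 i) = S.card := by omega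
  have hall : ∀ i ∈ S, l.count (Equiv.swap 0 i) = 1 := by
    intro i hiS
    by_contra hne2
    have : (∑ _i ∈ S, 1) < ∑ i ∈ S, l.count (Equiv.swap 0 i) :=
      Finset.sum_lt_sum hone ⟨i, hiS, by have := hone i hiS; omega⟩
    simp only [Finset.sum_const, smul_eq_mul, mul_one] at this
    omega
  obtain ⟨i, hiS, hmin⟩ := S.exists_min_image (fun i => l.idxOf (Equiv.swap 0 i)) hne
  have hdesc := swap_prod_mem_take hs (hne0 i hiS) (hne0 _ (hmapsto i hiS)) (hall i hiS)
  have h2 := indexOf_lt_of_mem_take hdesc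
  have h3 := hmin _ (hmapsto i hiS)
  omega

lemma mem_of_transitive {l : List (Equiv.Perm (Fin n))} (hs : IsStarList l)
    (ht : IsTransitiveList l) {i : Fin n} (hi : i ≠ 0) :
    Equiv.swap 0 i ∈ l := by
  by_contra hmem
  have hfix : ∀ g ∈ Subgroup.closure {τ | τ ∈ l}, g i = i := by
    intro g hg
    induction hg using Subgroup.closure_induction with
    | mem τ hτ =>
      obtain ⟨j, hj0, rfl⟩ := hs τ hτ
      have hij : i ≠ j := by rintro rfl; exact hmem hτ
      exact Equiv.swap_apply_of_ne_of_ne hi hij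
    | one => rfl
    | mul a b _ _ ha hb => simp [Equiv.Perm.mul_apply, hb, ha]
    | inv a _ ha => 
      exact (Equiv.Perm.eq_inv_iff_eq.2 ha).symm
  obtain ⟨g, hg, hgi⟩ := ht i 0
  exact hi ((hfix g hg).symm.trans hgi)

theorem card_filter_get_eq_count {α : Type*} [DecidableEq α] (l : List α) (τ : α) :
    (Finset.univ.filter fun k : Fin l.length => l.get k = τ).card = l.count τ := by
  rw [Finset.card_filter]
  induction l with
  | nil => simp
  | cons a t ih =>
    simp only [List.length_cons] at *
    rw [Fin.sum_univ_succ, List.count_cons]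
    simp only [List.get_eq_getElem, List.getElem_cons_zero, List.getElem_cons_succ,
      Fin.val_succ, Fin.val_zero] at *
    rw [ih, add_comm]
    congr 1
    by_cases h : a = τ <;> simp [h]

lemma ncard_eq_sum_count (l : List (Equiv.Perm (Fin n))) (S : Finset (Fin n))
    (h0 : (0 : Fin n) ∉ S) :
    {k : Fin l.length | ∃ i ∈ S, l.get k = Equiv.swap 0 i}.ncard
      = ∑ i ∈ S, l.count (Equiv.swap 0 i) := by
  classical
  rw [Set.ncard_eq_toFinset_card', Set.toFinset_setOf]
  have hsplit : (Finset.univ.filter fun k : Fin l.length => ∃ i ∈ S, l.get k = Equiv.swap 0 i)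
      = S.biUnion fun i => Finset.univ.filter fun k : Fin l.length => l.get k = Equiv.swap 0 i := by
    ext k
    simp only [Finset.mem_filter, Finset.mem_biUnion, Finset.mem_univ, true_and]
  rw [hsplit, Finset.card_biUnion]
  · exact Finset.sum_congr rfl fun i _ => card_filter_get_eq_count l _
  · intro i hi j hj hij
    simp only [Finset.disjoint_left, Finset.mem_filter, Finset.mem_univ, true_and]
    rintro k h1 h2
    exact hij (swap_zero_inj (h1 ▸ h2 ▸ rfl))

lemma length_eq_sum_count {l : List (Equiv.Perm (Fin n))} (hs : IsStarList l) :
    l.length = ∑ i ∈ Finset.univ.erase (0 : Fin n), l.count (Equiv.swap 0 i) := by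
  induction l with
  | nil => simp
  | cons τ t ih =>
    obtain ⟨j, hj0, rfl⟩ := hs _ mem_cons_self
    rw [List.length_cons, ih (star_tail hs)]
    have : ∀ i ∈ Finset.univ.erase (0 : Fin n),
        (Equiv.swap 0 j :: t).count (Equiv.swap 0 i)
          = t.count (Equiv.swap 0 i) + if i = j then 1 else 0 := by
      intro i _
      rw [List.count_cons]
      congr 1
      by_cases h : i = j
      · subst h; simp
      · have hne : ¬ Equiv.swap 0 i = Equiv.swap 0 j := fun hh => h (swap_zero_inj hh)
        have hne' : ¬ Equiv.swap 0 j = Equiv.swap 0 i := fun hh => hne hh.symm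
        simp [h, hne, hne']
    rw [Finset.sum_congr rfl this, Finset.sum_add_distrib, Finset.sum_ite_eq' _ j]
    simp [Finset.mem_erase, hj0]

open Equiv.Perm in
lemma sameCycle_ne_fixed {π : Equiv.Perm (Fin n)} {i : Fin n} (hsc : π.SameCycle 0 i)
    (hi : i ≠ 0) : π i ≠ i := by
  intro hfix
  obtain ⟨k, hk⟩ := hsc.symm
  rw [Equiv.Perm.zpow_apply_eq_self_of_apply_eq_self hfix k] at hk
  exact hi hk

open Equiv.Perm in
lemma sum_partition (π : Equiv.Perm (Fin n)) (f : Fin n → ℕ) :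
    ∑ i ∈ Finset.univ.erase (0 : Fin n), f i
      = (∑ i ∈ Finset.univ.filter (fun i : Fin n => i ≠ 0 ∧ π.SameCycle 0 i), f i)
        + (∑ σ ∈ π.cycleFactorsFinset.filter (fun σ => (0 : Fin n) ∉ σ.support),
            ∑ i ∈ σ.support, f i)
        + ∑ i ∈ (Finset.univ.filter fun x : Fin n => π x = x).erase 0, f i := by
  classical
  set T := Finset.univ.filter (fun i : Fin n => i ≠ 0 ∧ π.SameCycle 0 i) with hT
  set Cs := π.cycleFactorsFinset.filter (fun σ => (0 : Fin n) ∉ σ.support) with hCs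
  set F' := (Finset.univ.filter fun x : Fin n => π x = x).erase 0 with hF'
  have hsupp_pi : ∀ σ ∈ Cs, ∀ i ∈ σ.support, π i = σ i := by
    intro σ hσ i hi
    exact ((mem_cycleFactorsFinset_iff.1 (Finset.mem_filter.1 hσ).1).2 i hi).symm
  have hmove : ∀ σ ∈ Cs, ∀ i ∈ σ.support, π i ≠ i := by
    intro σ hσ i hi
    rw [hsupp_pi σ hσ i hi]
    exact mem_support.1 hi
  have hne0 : ∀ σ ∈ Cs, ∀ i ∈ σ.support, i ≠ 0 := by
    intro σ hσ i hi h
    exact (Finset.mem_filter.1 hσ).2 (h ▸ hi)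
  have hnsc : ∀ σ ∈ Cs, ∀ i ∈ σ.support, ¬ π.SameCycle 0 i := by
    intro σ hσ i hi hsc
    have hσc := (Finset.mem_filter.1 hσ).1
    have hiπ : i ∈ π.support := mem_cycleFactorsFinset_support_le hσc hi
    have : σ = π.cycleOf i := cycle_is_cycleOf hi hσc
    have h0 : (0 : Fin n) ∈ σ.support := by
      rw [this, mem_support_cycleOf_iff]
      exact ⟨hsc.symm, hiπ⟩
    exact (Finset.mem_filter.1 hσ).2 h0
  have hdisj_supp : ∀ σ ∈ Cs, ∀ σ' ∈ Cs, σ ≠ σ' →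
      _root_.Disjoint σ.support σ'.support := by
    intro σ hσ σ' hσ' hne
    exact (cycleFactorsFinset_pairwise_disjoint π
      (Finset.mem_coe.2 (Finset.mem_filter.1 hσ).1)
      (Finset.mem_coe.2 (Finset.mem_filter.1 hσ').1) hne).disjoint_support
  have hbi : ∑ σ ∈ Cs, ∑ i ∈ σ.support, f i = ∑ i ∈ Cs.biUnion (fun σ => σ.support), f i :=
    (Finset.sum_biUnion hdisj_supp).symm
  have hd1 : _root_.Disjoint T (Cs.biUnion fun σ => σ.support) := by
    rw [Finset.disjoint_left]
    intro i hiT hiB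
    obtain ⟨σ, hσ, hiσ⟩ := Finset.mem_biUnion.1 hiB
    exact hnsc σ hσ i hiσ (Finset.mem_filter.1 hiT).2.2
  have hd2 : _root_.Disjoint (T ∪ Cs.biUnion fun σ => σ.support) F' := by
    rw [Finset.disjoint_left]
    intro i hiU hiF
    have hfix : π i = i := (Finset.mem_filter.1 (Finset.mem_of_mem_erase hiF)).2
    rcases Finset.mem_union.1 hiU with hiT | hiB
    · obtain ⟨-, h1, h2⟩ := Finset.mem_filter.1 hiT
      exact sameCycle_ne_fixed h2 h1 hfix
    · obtain ⟨σ, hσ, hiσ⟩ := Finset.mem_biUnion.1 hiB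
      exact hmove σ hσ i hiσ hfix
  have hunion : Finset.univ.erase (0 : Fin n) = (T ∪ Cs.biUnion fun σ => σ.support) ∪ F' := by
    ext i
    simp only [Finset.mem_erase, Finset.mem_univ, and_true, Finset.mem_union,
      Finset.mem_biUnion, hT, hF', Finset.mem_filter, true_and]
    constructor
    · intro hi0
      by_cases hfix : π i = i
      · exact Or.inr ⟨hi0, hfix⟩
      · by_cases hsc : π.SameCycle 0 i
        · exact Or.inl (Or.inl ⟨hi0, hsc⟩)
        · refine Or.inl (Or.inr ⟨π.cycleOf i, ?_, ?_⟩)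
          · rw [hCs, Finset.mem_filter]
            refine ⟨cycleOf_mem_cycleFactorsFinset_iff.2 (mem_support.2 hfix), ?_⟩
            rw [mem_support_cycleOf_iff]
            rintro ⟨h1, -⟩
            exact hsc h1.symm
          · rw [mem_support_cycleOf_iff]
            exact ⟨Equiv.Perm.SameCycle.refl _ _, mem_support.2 hfix⟩
    · rintro (h | h)
      · rcases h with h | ⟨σ, hσ, hiσ⟩
        · exact h.1
        · exact hne0 σ hσ i hiσ
      · exact h.1
  rw [hunion, Finset.sum_union hd2, Finset.sum_union hd1, hbi]

open Equiv.Perm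

theorem stmt5 {n : ℕ} [NeZero n] (π : Equiv.Perm (Fin n))
    (l : List (Equiv.Perm (Fin n)))
    (hl : IsMinimalTransitiveStarFactorization π l) :
    (∀ σ ∈ π.cycleFactorsFinset, (0 : Fin n) ∉ σ.support →
      {k : Fin l.length | ∃ i ∈ σ.support, l.get k = Equiv.swap 0 i}.ncard
        = σ.support.card + 1) ∧
    {k : Fin l.length | ∃ i : Fin n, i ≠ 0 ∧ π.SameCycle 0 i ∧
        l.get k = Equiv.swap 0 i}.ncard
      = {i : Fin n | π.SameCycle 0 i}.ncard - 1 ∧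
    l.length = n + numCycles π - 2 := by
  classical
  obtain ⟨⟨hstar, hprod⟩, htrans, hlen⟩ := hl
  set c : Fin n → ℕ := fun i => l.count (Equiv.swap 0 i) with hc
  set T := Finset.univ.filter (fun i : Fin n => i ≠ 0 ∧ π.SameCycle 0 i) with hT
  set Cs := π.cycleFactorsFinset.filter (fun σ => (0 : Fin n) ∉ σ.support) with hCs
  set F := Finset.univ.filter (fun x : Fin n => π x = x) with hF
  set F' := F.erase 0 with hF'
  -- total length
  have hlen_sum : l.length = ∑ i ∈ Finset.univ.erase (0 : Fin n), c i :=
    length_eq_sum_count hstar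
  have hsplit := sum_partition π c
  have hcards := sum_partition π (fun _ => 1)
  simp only [Finset.sum_const, smul_eq_mul, mul_one] at hcards
  simp only [← hT, ← hCs, ← hF] at hsplit hcards
  simp only [← hF'] at hsplit hcards
  -- lower bounds
  have hAbound : T.card ≤ ∑ i ∈ T, c i := by
    calc T.card = ∑ _i ∈ T, 1 := by simp
    _ ≤ _ := by
      refine Finset.sum_le_sum fun i hi => ?_
      obtain ⟨-, hi0, hsc⟩ := Finset.mem_filter.1 hi
      refine List.count_pos_iff.2 (mem_of_prod_move hstar hi0 ?_)
      rw [hprod]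
      exact sameCycle_ne_fixed hsc hi0
  have hBbound : ∀ σ ∈ Cs, σ.support.card + 1 ≤ ∑ i ∈ σ.support, c i := by
    intro σ hσ
    obtain ⟨hσc, hσ0⟩ := Finset.mem_filter.1 hσ
    have hagree : ∀ i ∈ σ.support, π i = σ i :=
      fun i hi => ((mem_cycleFactorsFinset_iff.1 hσc).2 i hi).symm
    refine card_succ_le_sum_count hstar σ.support hσ0
      (IsCycle.nonempty_support (mem_cycleFactorsFinset_iff.1 hσc).1) ?_ ?_
    · intro i hi
      rw [hprod, hagree i hi]
      exact apply_mem_support.2 hi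
    · intro i hi
      rw [hprod, hagree i hi]
      exact mem_support.1 hi
  have hDbound : 2 * F'.card ≤ ∑ i ∈ F', c i := by
    calc 2 * F'.card = ∑ _i ∈ F', 2 := by simp [mul_comm]
    _ ≤ _ := by
      refine Finset.sum_le_sum fun i hi => ?_
      have hi0 : i ≠ 0 := Finset.ne_of_mem_erase hi
      have hfix : π i = i := (Finset.mem_filter.1 (Finset.mem_of_mem_erase hi)).2
      exact two_le_count_of_fixed hstar hi0 (by rw [hprod]; exact hfix)
        (mem_of_transitive hstar htrans hi0)
  have hBsum : ∑ σ ∈ Cs, (σ.support.card + 1) ≤ ∑ σ ∈ Cs, ∑ i ∈ σ.support, c i :=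
    Finset.sum_le_sum hBbound
  rw [Finset.sum_add_distrib, Finset.sum_const, smul_eq_mul, mul_one] at hBsum
  -- cardinal identities
  have hUcard : (Finset.univ.erase (0 : Fin n)).card + 1 = n := by
    rw [Finset.card_erase_of_mem (Finset.mem_univ _), Finset.card_univ, Fintype.card_fin]
    have : 0 < n := Nat.pos_of_ne_zero (NeZero.ne n)
    omega
  have hm : numCycles π = π.cycleFactorsFinset.card + F.card := by
    rw [numCycles, cycleType_def, Multiset.card_map]
    rfl
  have hcase : (π.cycleFactorsFinset.card = Cs.card ∧ F.card = F'.card + 1) ∨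
      (π.cycleFactorsFinset.card = Cs.card + 1 ∧ F.card = F'.card) := by
    by_cases h0 : π 0 = 0
    · left
      have hCsEq : Cs = π.cycleFactorsFinset := by
        rw [hCs]
        refine Finset.filter_true_of_mem fun σ hσ => fun hmem => ?_
        have : (0 : Fin n) ∈ π.support := mem_cycleFactorsFinset_support_le hσ hmem
        exact (mem_support.1 this) h0
      have hmem : (0 : Fin n) ∈ F := by simp [hF, h0]
      have h1 : F'.card = F.card - 1 := by rw [hF', Finset.card_erase_of_mem hmem]
      have h2 : 0 < F.card := Finset.card_pos.2 ⟨_, hmem⟩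
      constructor
      · rw [hCsEq]
      · omega
    · right
      have hmem : π.cycleOf 0 ∈ π.cycleFactorsFinset :=
        cycleOf_mem_cycleFactorsFinset_iff.2 (mem_support.2 h0)
      have hCsEq : Cs = π.cycleFactorsFinset.erase (π.cycleOf 0) := by
        rw [hCs]
        ext σ
        simp only [Finset.mem_filter, Finset.mem_erase]
        constructor
        · rintro ⟨h1, h2⟩
          refine ⟨fun he => h2 ?_, h1⟩
          rw [he, mem_support_cycleOf_iff]
          exact ⟨Equiv.Perm.SameCycle.refl _ _, mem_support.2 h0⟩
        · rintro ⟨h1, h2⟩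
          refine ⟨h2, fun hmem0 => h1 (cycle_is_cycleOf hmem0 h2)⟩
      have h1 : Cs.card = π.cycleFactorsFinset.card - 1 := by
        rw [hCsEq, Finset.card_erase_of_mem hmem]
      have hpos : 0 < π.cycleFactorsFinset.card := Finset.card_pos.2 ⟨_, hmem⟩
      have h2 : (0 : Fin n) ∉ F := by simp [hF, h0]
      have h3 : F' = F := by rw [hF', Finset.erase_eq_of_notMem h2]
      exact ⟨by omega, by rw [h3]⟩
  have hm1 : 1 ≤ numCycles π := by
    rcases hcase with ⟨e1, e2⟩ | ⟨e1, e2⟩ <;> omega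
  have hlen2 : l.length + 2 = n + numCycles π := by
    have : 0 < n := Nat.pos_of_ne_zero (NeZero.ne n)
    omega
  -- extract equalities
  have hkey : (∑ i ∈ T, c i) = T.card ∧
      (∑ σ ∈ Cs, ∑ i ∈ σ.support, c i) = (∑ σ ∈ Cs, σ.support.card) + Cs.card := by
    rcases hcase with ⟨e1, e2⟩ | ⟨e1, e2⟩ <;> constructor <;> omega
  have hBpoint : ∀ σ ∈ Cs, σ.support.card + 1 = ∑ i ∈ σ.support, c i := by
    refine (Finset.sum_eq_sum_iff_of_le hBbound).1 ?_
    rw [Finset.sum_add_distrib, Finset.sum_const, smul_eq_mul, mul_one, hkey.2]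
  refine ⟨?_, ?_, hlen⟩
  · intro σ hσc hσ0
    have hσ : σ ∈ Cs := Finset.mem_filter.2 ⟨hσc, hσ0⟩
    rw [ncard_eq_sum_count l σ.support hσ0]
    exact (hBpoint σ hσ).symm
  · have hset : {k : Fin l.length | ∃ i : Fin n, i ≠ 0 ∧ π.SameCycle 0 i ∧
        l.get k = Equiv.swap 0 i} = {k : Fin l.length | ∃ i ∈ T, l.get k = Equiv.swap 0 i} := by
      ext k
      simp only [Set.mem_setOf_eq, hT, Finset.mem_filter, Finset.mem_univ, true_and]
      tauto
    have h0T : (0 : Fin n) ∉ T := by simp [hT]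
    rw [hset, ncard_eq_sum_count l T h0T, hkey.1]
    have hright : {i : Fin n | π.SameCycle 0 i}.ncard = T.card + 1 := by
      have : {i : Fin n | π.SameCycle 0 i}
          = ↑(Finset.univ.filter fun i : Fin n => π.SameCycle 0 i) := by
        ext i; simp
      rw [this, Set.ncard_coe_finset]
      have : (Finset.univ.filter fun i : Fin n => π.SameCycle 0 i) = insert 0 T := by
        ext i
        simp only [Finset.mem_filter, Finset.mem_univ, true_and, Finset.mem_insert, hT]
        constructor
        · intro hsc
          by_cases hi0 : i = 0
          · exact Or.inl hi0
          · exact Or.inr (by simp [hi0, hsc])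
        · rintro (rfl | h)
          · exact Equiv.Perm.SameCycle.refl _ _
          · simp at h; exact h.2
      rw [this, Finset.card_insert_of_notMem h0T]
    rw [hright]
    omega

end StarHelpers
end

section
/- Let (τ_1,...,τ_r) be a minimal transitive star factorization of π ∈ S_n and let σ = (1 b_2 ... b_ℓ) be the cycle of π containing 1. Then each transposition (1 b_i), 2 ≤ i ≤ ℓ, appears exactly once among τ_1,...,τ_r, and these factors appear in right-to-left order (1 b_2), (1 b_3), ..., (1 b_ℓ) (i.e., reading the factorization from right to left one encounters (1 b_2) first, then (1 b_3), etc.). -/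
namespace StarFactAux

open Equiv Finset

set_option linter.unusedSectionVars false

variable {n : ℕ} [NeZero n]

lemma swap_ne_one {a : Fin n} (ha : a ≠ 0) : Equiv.swap 0 a ≠ 1 := by
  simpa [Equiv.swap_eq_one_iff] using fun h => ha h.symm

lemma swap_inj {a a' : Fin n} (h : Equiv.swap 0 a = Equiv.swap 0 a') : a = a' := by
  have := congrArg (fun e : Equiv.Perm (Fin n) => e 0) h
  simpa using this

lemma prod_fix (l : List (Equiv.Perm (Fin n))) (x : Fin n) (h : ∀ τ ∈ l, τ x = x) :
    l.prod x = x := by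
  induction l with
  | nil => simp
  | cons τ t ih =>
    rw [List.prod_cons, Equiv.Perm.mul_apply, ih (fun σ hσ => h σ (List.mem_cons_of_mem _ hσ)),
      h τ List.mem_cons_self]

lemma starList_tail {τ : Equiv.Perm (Fin n)} {t : List (Equiv.Perm (Fin n))}
    (h : IsStarList (τ :: t)) : IsStarList t :=
  fun σ hσ => h σ (List.mem_cons_of_mem _ hσ)

/-- If `swap 0 a` does not occur in a star list `t` and `a ≠ 0`, then the product fixes `a`. -/
lemma prod_fix_of_not_mem {t : List (Equiv.Perm (Fin n))} (ht : IsStarList t)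
    {a : Fin n} (ha : a ≠ 0) (hmem : Equiv.swap 0 a ∉ t) : t.prod a = a := by
  apply prod_fix
  intro σ hσ
  obtain ⟨x, hx0, rfl⟩ := ht σ hσ
  have hxa : x ≠ a := by rintro rfl; exact hmem hσ
  exact Equiv.swap_apply_of_ne_of_ne ha (Ne.symm hxa)

lemma length_eq_sum_count (l : List (Equiv.Perm (Fin n))) (hl : IsStarList l) :
    ∑ a : Fin n, l.count (Equiv.swap 0 a) = l.length := by
  induction l with
  | nil => simp
  | cons τ t ih =>
    have ht := starList_tail hl
    obtain ⟨i, hi0, rfl⟩ := hl τ List.mem_cons_self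
    have hcount : ∀ a : Fin n, (Equiv.swap 0 i :: t).count (Equiv.swap 0 a)
        = t.count (Equiv.swap 0 a) + if a = i then 1 else 0 := by
      intro a
      rw [List.count_cons]
      by_cases h : a = i
      · simp [h]
      · have hne : ¬ (Equiv.swap (0:Fin n) a = Equiv.swap 0 i) := fun he => h (swap_inj he)
        have hne' : ¬ (Equiv.swap (0:Fin n) i = Equiv.swap 0 a) := fun he => hne he.symm
        simp [h, hne, hne']
    simp only [hcount]
    rw [Finset.sum_add_distrib, ih ht, Finset.sum_ite_eq' Finset.univ i (fun _ => 1)]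
    simp

lemma count_swap_zero_zero (l : List (Equiv.Perm (Fin n))) (hl : IsStarList l) :
    l.count (Equiv.swap (0 : Fin n) 0) = 0 := by
  rw [List.count_eq_zero]
  intro hmem
  obtain ⟨i, hi0, he⟩ := hl _ hmem
  exact hi0 (swap_inj he).symm

/-- Key lemma A: if every element of a `π`-invariant set `S` avoiding `0` occurs exactly
once as a star factor, then `S` is empty. -/
lemma eq_empty_of_all_once (S : Finset (Fin n)) (h0 : (0 : Fin n) ∉ S) :
    ∀ l : List (Equiv.Perm (Fin n)), IsStarList l →
      (∀ x ∈ S, l.prod x ∈ S) → (∀ x ∈ S, l.count (Equiv.swap 0 x) = 1) → S = ∅ := by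
  intro l
  induction l with
  | nil =>
    intro _ _ hc
    by_contra hne
    obtain ⟨x, hx⟩ := Finset.nonempty_iff_ne_empty.mpr hne
    simpa using hc x hx
  | cons τ t ih =>
    intro hstar hinv hc
    obtain ⟨a, ha0, rfl⟩ := hstar τ List.mem_cons_self
    have ht := starList_tail hstar
    by_cases haS : a ∈ S
    · exfalso
      have h1 : t.count (Equiv.swap 0 a) = 0 := by
        have := hc a haS
        rw [List.count_cons_self] at this
        omega
      have hfix : t.prod a = a :=
        prod_fix_of_not_mem ht ha0 (by rw [← List.count_eq_zero] at *; exact h1)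
      have := hinv a haS
      rw [List.prod_cons, Equiv.Perm.mul_apply, hfix, Equiv.swap_apply_right] at this
      exact h0 this
    · refine ih ht ?_ ?_
      · intro x hx
        have hxs := hinv x hx
        rw [List.prod_cons, Equiv.Perm.mul_apply] at hxs
        set u := Equiv.swap 0 a (t.prod x) with hu
        have hu0 : u ≠ 0 := fun h => h0 (h ▸ hxs)
        have hua : u ≠ a := fun h => haS (h ▸ hxs)
        have : t.prod x = u := by
          have : Equiv.swap 0 a u = t.prod x := by rw [hu, Equiv.swap_apply_self]
          rw [← this, Equiv.swap_apply_of_ne_of_ne hu0 hua]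
        rwa [this]
      · intro x hx
        have := hc x hx
        rw [List.count_cons] at this
        have hne : (Equiv.swap 0 a : Equiv.Perm (Fin n)) ≠ Equiv.swap 0 x := by
          intro h
          exact haS (swap_inj h ▸ hx)
        simpa [hne] using this

/-- Ordering lemma: if `swap 0 x` and `swap 0 y` occur at most once, and the product
maps `x` to `y`, then any occurrence of `swap 0 y` is strictly left of any occurrence
of `swap 0 x`. -/
lemma order_lemma :
    ∀ l : List (Equiv.Perm (Fin n)), ∀ x y : Fin n, IsStarList l →
      x ≠ 0 → y ≠ 0 → x ≠ y →
      l.count (Equiv.swap 0 x) ≤ 1 → l.count (Equiv.swap 0 y) ≤ 1 →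
      l.prod x = y →
      ∀ p q : Fin l.length, l.get p = Equiv.swap 0 x → l.get q = Equiv.swap 0 y →
        q < p := by
  intro l
  induction l with
  | nil =>
    intro x y _ _ _ _ _ _ _ p _ _ _
    exact absurd p.2 (by simp)
  | cons τ t ih =>
    intro x y hstar hx0 hy0 hxy hcx hcy hprod p q hp hq
    obtain ⟨a, ha0, rfl⟩ := hstar τ List.mem_cons_self
    have ht := starList_tail hstar
    by_cases hax : a = x
    · subst hax
      exfalso
      have h1 : t.count (Equiv.swap 0 a) = 0 := by
        rw [List.count_cons_self] at hcx; omega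
      have hfix : t.prod a = a :=
        prod_fix_of_not_mem ht ha0 (List.count_eq_zero.mp h1)
      rw [List.prod_cons, Equiv.Perm.mul_apply, hfix, Equiv.swap_apply_right] at hprod
      exact hy0 hprod.symm
    by_cases hay : a = y
    · subst hay
      have hqt : t.count (Equiv.swap 0 a) = 0 := by
        rw [List.count_cons_self] at hcy; omega
      have hnmem : Equiv.swap 0 a ∉ t := List.count_eq_zero.mp hqt
      have hq0 : (q : ℕ) = 0 := by
        by_contra h
        obtain ⟨k, hk⟩ : ∃ k, (q : ℕ) = k + 1 := ⟨(q : ℕ) - 1, by omega⟩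
        have hk' : k < t.length := by
          have := q.2; simp only [List.length_cons] at this; omega
        have : t.get ⟨k, hk'⟩ = Equiv.swap 0 a := by
          rw [← hq]
          rw [List.get_eq_getElem, List.get_eq_getElem]
          simp only [hk]
          exact (List.getElem_cons_succ _ _ _ _).symm
        exact hnmem (this ▸ List.get_mem t ⟨k, hk'⟩)
      have hp0 : (p : ℕ) ≠ 0 := by
        intro h
        have : (Equiv.swap 0 a :: t).get p = Equiv.swap 0 a := by
          rw [List.get_eq_getElem]
          simp [h]
        rw [hp] at this
        exact hxy (swap_inj this)
      exact Fin.lt_def.mpr (by omega)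
    · -- recurse
      have hprod' : t.prod x = y := by
        rw [List.prod_cons, Equiv.Perm.mul_apply] at hprod
        set w := t.prod x with hw
        rcases eq_or_ne w 0 with h | h
        · rw [h, Equiv.swap_apply_left] at hprod; exact absurd hprod hay
        rcases eq_or_ne w a with h' | h'
        · rw [h', Equiv.swap_apply_right] at hprod; exact absurd hprod.symm hy0
        · rwa [Equiv.swap_apply_of_ne_of_ne h h'] at hprod
      have hp0 : (p : ℕ) ≠ 0 := by
        intro h
        have : (Equiv.swap 0 a :: t).get p = Equiv.swap 0 a := by
          rw [List.get_eq_getElem]; simp [h]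
        rw [hp] at this
        exact hax (swap_inj this.symm)
      have hq0 : (q : ℕ) ≠ 0 := by
        intro h
        have : (Equiv.swap 0 a :: t).get q = Equiv.swap 0 a := by
          rw [List.get_eq_getElem]; simp [h]
        rw [hq] at this
        exact hay (swap_inj this.symm)
      obtain ⟨kp, hkp⟩ : ∃ k, (p : ℕ) = k + 1 := ⟨(p : ℕ) - 1, by omega⟩
      obtain ⟨kq, hkq⟩ : ∃ k, (q : ℕ) = k + 1 := ⟨(q : ℕ) - 1, by omega⟩
      have hkp' : kp < t.length := by have := p.2; simp only [List.length_cons] at this; omega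
      have hkq' : kq < t.length := by have := q.2; simp only [List.length_cons] at this; omega
      have hcx' : t.count (Equiv.swap 0 x) ≤ 1 := by
        rw [List.count_cons] at hcx; omega
      have hcy' : t.count (Equiv.swap 0 y) ≤ 1 := by
        rw [List.count_cons] at hcy; omega
      have hpt : t.get ⟨kp, hkp'⟩ = Equiv.swap 0 x := by
        rw [← hp, List.get_eq_getElem, List.get_eq_getElem]
        simp only [hkp]
        exact (List.getElem_cons_succ _ _ _ _).symm
      have hqt : t.get ⟨kq, hkq'⟩ = Equiv.swap 0 y := by
        rw [← hq, List.get_eq_getElem, List.get_eq_getElem]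
        simp only [hkq]
        exact (List.getElem_cons_succ _ _ _ _).symm
      have := ih x y ht hx0 hy0 hxy hcx' hcy' hprod' ⟨kp, hkp'⟩ ⟨kq, hkq'⟩ hpt hqt
      rw [Fin.lt_def] at this ⊢
      simp only at this
      omega

/-- The sameCycle class of `x` as a finset. -/
def K (π : Equiv.Perm (Fin n)) (x : Fin n) : Finset (Fin n) :=
  insert x (π.cycleOf x).support

lemma mem_K {π : Equiv.Perm (Fin n)} {x y : Fin n} : y ∈ K π x ↔ π.SameCycle x y := by
  rw [K, Finset.mem_insert, Equiv.Perm.mem_support_cycleOf_iff]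
  constructor
  · rintro (rfl | ⟨h, _⟩)
    · exact Equiv.Perm.SameCycle.refl _ _
    · exact h
  · intro h
    by_cases hx : x ∈ π.support
    · exact Or.inr ⟨h, hx⟩
    · left
      rw [Equiv.Perm.notMem_support] at hx
      obtain ⟨k, hk⟩ := h
      rw [← hk, Equiv.Perm.zpow_apply_eq_self_of_apply_eq_self hx]

lemma K_eq_of_sameCycle {π : Equiv.Perm (Fin n)} {x y : Fin n} (h : π.SameCycle x y) :
    K π x = K π y := by
  ext z
  rw [mem_K, mem_K]
  exact ⟨fun hz => h.symm.trans hz, fun hz => h.trans hz⟩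

lemma K_of_fixed {π : Equiv.Perm (Fin n)} {x : Fin n} (h : π x = x) : K π x = {x} := by
  rw [K, (Equiv.Perm.cycleOf_eq_one_iff π).mpr h]
  simp

lemma K_of_support {π : Equiv.Perm (Fin n)} {x : Fin n} (h : x ∈ π.support) :
    K π x = (π.cycleOf x).support := by
  rw [K, Finset.insert_eq_self]
  exact Equiv.Perm.mem_support_cycleOf_iff.mpr ⟨Equiv.Perm.SameCycle.refl _ _, h⟩

lemma mem_support_of_mem_cf {π c : Equiv.Perm (Fin n)} (hc : c ∈ π.cycleFactorsFinset)
    {x : Fin n} (hx : x ∈ c.support) : x ∈ π.support := by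
  obtain ⟨h1, h2⟩ := Equiv.Perm.mem_cycleFactorsFinset_iff.mp hc
  rw [Equiv.Perm.mem_support] at hx ⊢
  rw [← h2 x (Equiv.Perm.mem_support.mpr hx)]
  exact hx

lemma numCycles_eq_card_classes (π : Equiv.Perm (Fin n)) :
    numCycles π = (Finset.univ.image (K π)).card := by
  classical
  set Fix := (Finset.univ.filter fun x => π x = x) with hFix
  have huniv : (Finset.univ : Finset (Fin n)) = Fix ∪ π.support := by
    ext x
    simp [hFix, Equiv.Perm.mem_support, em]
  have himg : Finset.univ.image (K π) = Fix.image (K π) ∪ π.support.image (K π) := by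
    rw [← Finset.image_union, ← huniv]
  have hdisj : Disjoint (Fix.image (K π)) (π.support.image (K π)) := by
    rw [Finset.disjoint_left]
    intro C hC1 hC2
    obtain ⟨x, hx, rfl⟩ := Finset.mem_image.mp hC1
    obtain ⟨y, hy, hKy⟩ := Finset.mem_image.mp hC2
    have hxfix : π x = x := (Finset.mem_filter.mp hx).2
    have : y ∈ K π x := by rw [← hKy]; exact mem_K.mpr (Equiv.Perm.SameCycle.refl _ _)
    rw [K_of_fixed hxfix, Finset.mem_singleton] at this
    subst this
    exact (Equiv.Perm.mem_support.mp hy) hxfix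
  have hcard1 : (Fix.image (K π)).card = Fix.card := by
    apply Finset.card_image_of_injOn
    intro x hx y hy hxy
    have hxfix : π x = x := (Finset.mem_filter.mp hx).2
    have hyfix : π y = y := (Finset.mem_filter.mp hy).2
    have : y ∈ K π x := by rw [hxy]; exact mem_K.mpr (Equiv.Perm.SameCycle.refl _ _)
    rw [K_of_fixed hxfix, Finset.mem_singleton] at this
    exact this.symm
  have himg2 : π.support.image (K π) = π.cycleFactorsFinset.image Equiv.Perm.support := by
    ext C
    simp only [Finset.mem_image]
    constructor
    · rintro ⟨x, hx, rfl⟩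
      exact ⟨π.cycleOf x, Equiv.Perm.cycleOf_mem_cycleFactorsFinset_iff.mpr hx,
        (K_of_support hx).symm⟩
    · rintro ⟨c, hc, rfl⟩
      have hcyc : c.IsCycle := (Equiv.Perm.mem_cycleFactorsFinset_iff.mp hc).1
      obtain ⟨x, hx⟩ := hcyc.nonempty_support
      have hxs : x ∈ π.support := mem_support_of_mem_cf hc hx
      refine ⟨x, hxs, ?_⟩
      rw [K_of_support hxs, ← Equiv.Perm.cycle_is_cycleOf hx hc]
  have hcard2 : (π.cycleFactorsFinset.image Equiv.Perm.support).card
      = π.cycleFactorsFinset.card := by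
    apply Finset.card_image_of_injOn
    intro c1 h1 c2 h2 heq
    by_contra hne
    have hd := Equiv.Perm.cycleFactorsFinset_pairwise_disjoint π h1 h2 hne
    rw [Equiv.Perm.disjoint_iff_disjoint_support, heq, disjoint_self,
      Finset.bot_eq_empty] at hd
    have hcyc : c2.IsCycle := (Equiv.Perm.mem_cycleFactorsFinset_iff.mp h2).1
    obtain ⟨x, hx⟩ := hcyc.nonempty_support
    rw [hd] at hx
    exact absurd hx (Finset.notMem_empty x)
  have hct : π.cycleType.card = π.cycleFactorsFinset.card := by
    rw [Equiv.Perm.cycleType_def, Multiset.card_map]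
    rfl
  rw [numCycles, himg, Finset.card_union_of_disjoint hdisj, hcard1, himg2, hcard2, hct,
    ← hFix, Nat.add_comm]

end StarFactAux

open StarFactAux

/-- Lemma 1(2): the cycle `(1 b₂ ⋯ b_ℓ)` of `π` containing the symbol 1
(encoded as `0 : Fin n`, with `b i = b_{i+1}` and `b 0 = 0`): each factor
`(1 bᵢ)` appears exactly once and the factors appear in right-to-left order
`(1 b₂), (1 b₃), …, (1 b_ℓ)`. -/
theorem stmt6 {n : ℕ} [NeZero n] (π : Equiv.Perm (Fin n))
    (l : List (Equiv.Perm (Fin n)))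
    (hl : IsMinimalTransitiveStarFactorization π l)
    (ℓ : ℕ) (hℓ : 1 ≤ ℓ) (b : ℕ → Fin n) (hb0 : b 0 = 0)
    (hinj : ∀ i j, i < ℓ → j < ℓ → b i = b j → i = j)
    (hcyc : ∀ i, i + 1 < ℓ → π (b i) = b (i + 1))
    (hlast : π (b (ℓ - 1)) = b 0)
    (horb : ∀ x : Fin n, π.SameCycle 0 x ↔ ∃ i < ℓ, x = b i) :
    (∀ i, 1 ≤ i → i < ℓ → l.count (Equiv.swap 0 (b i)) = 1) ∧
    (∀ i j, 1 ≤ i → i < j → j < ℓ → ∀ p q : Fin l.length,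
      l.get p = Equiv.swap 0 (b i) → l.get q = Equiv.swap 0 (b j) → q < p) := by
  classical
  obtain ⟨⟨hstar, hprod⟩, htrans, hlen⟩ := hl
  -- every nonzero symbol occurs at least once
  have hpos : ∀ a : Fin n, a ≠ 0 → 1 ≤ l.count (Equiv.swap 0 a) := by
    intro a ha
    rw [Nat.one_le_iff_ne_zero]
    intro h
    have hnmem : Equiv.swap 0 a ∉ l := List.count_eq_zero.mp h
    obtain ⟨g, hg, hga⟩ := htrans 0 a
    have hle : Subgroup.closure {τ | τ ∈ l} ≤ MulAction.stabilizer (Equiv.Perm (Fin n)) a := by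
      rw [Subgroup.closure_le]
      intro τ hτ
      obtain ⟨i, hi0, rfl⟩ := hstar τ hτ
      have hia : i ≠ a := by rintro rfl; exact hnmem hτ
      rw [SetLike.mem_coe, MulAction.mem_stabilizer_iff, Equiv.Perm.smul_def]
      exact Equiv.swap_apply_of_ne_of_ne ha (Ne.symm hia)
    have hga' : g a = a := by
      have := hle hg
      rwa [MulAction.mem_stabilizer_iff, Equiv.Perm.smul_def] at this
    exact ha (g.injective (hga.trans hga'.symm)).symm
  set c : Fin n → ℕ := fun a => l.count (Equiv.swap 0 a) with hcdef
  have hsum : ∑ a : Fin n, c a = l.length := length_eq_sum_count l hstar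
  set CS := Finset.univ.image (K π) with hCS
  have hm : numCycles π = CS.card := numCycles_eq_card_classes π
  have hbiUnion : CS.biUnion id = Finset.univ := by
    apply Finset.eq_univ_of_forall
    intro x
    rw [Finset.mem_biUnion]
    exact ⟨K π x, Finset.mem_image_of_mem _ (Finset.mem_univ x),
      mem_K.mpr (Equiv.Perm.SameCycle.refl _ _)⟩
  have hpd : ∀ C1 ∈ CS, ∀ C2 ∈ CS, C1 ≠ C2 → Disjoint C1 C2 := by
    intro C1 hC1 C2 hC2 hne
    obtain ⟨x, _, rfl⟩ := Finset.mem_image.mp hC1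
    obtain ⟨y, _, rfl⟩ := Finset.mem_image.mp hC2
    rw [Finset.disjoint_left]
    intro z hz1 hz2
    exact hne ((K_eq_of_sameCycle (mem_K.mp hz1)).trans
      (K_eq_of_sameCycle (mem_K.mp hz2)).symm)
  have hpd' : (CS : Set (Finset (Fin n))).PairwiseDisjoint id := by
    intro C1 hC1 C2 hC2 hne
    exact hpd C1 hC1 C2 hC2 hne
  have hsum2 : ∑ C ∈ CS, ∑ a ∈ C, c a = l.length := by
    have h1 : ∑ a ∈ CS.biUnion id, c a = l.length := by rw [hbiUnion]; exact hsum
    rwa [Finset.sum_biUnion hpd'] at h1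
  have hK0 : K π 0 = (Finset.range ℓ).image b := by
    ext y
    rw [mem_K, horb y, Finset.mem_image]
    constructor
    · rintro ⟨i, hi, rfl⟩; exact ⟨i, Finset.mem_range.mpr hi, rfl⟩
    · rintro ⟨i, hi, rfl⟩; exact ⟨i, Finset.mem_range.mp hi, rfl⟩
  have hbinj : Set.InjOn b (Finset.range ℓ) := by
    intro i hi j hj hij
    exact hinj i j (Finset.mem_range.mp (Finset.mem_coe.mp hi))
      (Finset.mem_range.mp (Finset.mem_coe.mp hj)) hij
  have hK0card : (K π 0).card = ℓ := by
    rw [hK0, Finset.card_image_of_injOn hbinj, Finset.card_range]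
  have hK0mem : K π 0 ∈ CS := Finset.mem_image_of_mem _ (Finset.mem_univ 0)
  have hlb : ∀ C ∈ CS.erase (K π 0), C.card + 1 ≤ ∑ a ∈ C, c a := by
    intro C hC
    obtain ⟨hCne, hCmem⟩ := Finset.mem_erase.mp hC
    obtain ⟨y, _, hKy⟩ := Finset.mem_image.mp hCmem
    subst hKy
    have h0 : (0 : Fin n) ∉ K π y := by
      intro h
      exact hCne (K_eq_of_sameCycle (mem_K.mp h))
    have hNe : (K π y).Nonempty := ⟨y, mem_K.mpr (Equiv.Perm.SameCycle.refl _ _)⟩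
    have hinv' : ∀ x ∈ K π y, l.prod x ∈ K π y := by
      intro x hx
      rw [hprod]
      exact mem_K.mpr ((mem_K.mp hx).apply_right)
    by_contra hlt
    push_neg at hlt
    have h1 : ∀ x ∈ K π y, 1 ≤ c x := fun x hx => hpos x (fun h => h0 (h ▸ hx))
    have hge : ∑ a ∈ K π y, 1 ≤ ∑ a ∈ K π y, c a := Finset.sum_le_sum h1
    have hcard : ∑ a ∈ K π y, 1 = (K π y).card := by simp
    have heq : ∑ a ∈ K π y, (1 : ℕ) = ∑ a ∈ K π y, c a := by omega
    have hall := (Finset.sum_eq_sum_iff_of_le h1).mp heq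
    have hempty := eq_empty_of_all_once (K π y) h0 l hstar hinv'
      (fun x hx => (hall x hx).symm)
    rw [hempty] at hNe
    exact Finset.not_nonempty_empty hNe
  have hsplit : ∑ a ∈ K π 0, c a + ∑ C ∈ CS.erase (K π 0), (∑ a ∈ C, c a) = l.length := by
    rw [← hsum2]
    exact Finset.add_sum_erase CS (fun C => ∑ a ∈ C, c a) hK0mem
  have hB : ∑ C ∈ CS.erase (K π 0), (C.card + 1) ≤
      ∑ C ∈ CS.erase (K π 0), ∑ a ∈ C, c a := Finset.sum_le_sum hlb
  have hcards : ∑ C ∈ CS, C.card = n := by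
    have h := Finset.card_biUnion hpd
    rw [show (CS.biUnion fun x => x) = Finset.univ from hbiUnion,
      Finset.card_univ, Fintype.card_fin] at h
    simpa using h.symm
  have hcardsE : (K π 0).card + ∑ C ∈ CS.erase (K π 0), C.card = n :=
    (Finset.add_sum_erase CS Finset.card hK0mem).trans hcards
  have hE : (CS.erase (K π 0)).card + 1 = CS.card := Finset.card_erase_add_one hK0mem
  have hsum_sep : ∑ C ∈ CS.erase (K π 0), (C.card + 1) =
      (∑ C ∈ CS.erase (K π 0), C.card) + (CS.erase (K π 0)).card := by
    rw [Finset.sum_add_distrib]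
    simp
  have hT : ∑ a ∈ K π 0, c a ≤ ℓ - 1 := by
    rw [hm] at hlen
    rw [hK0card] at hcardsE
    omega
  have hsumK0 : ∑ a ∈ K π 0, c a = ∑ i ∈ Finset.range ℓ, c (b i) := by
    rw [hK0, Finset.sum_image (fun i hi j hj h => hbinj (Finset.mem_coe.mpr hi)
      (Finset.mem_coe.mpr hj) h)]
  have hc0 : c (b 0) = 0 := by
    rw [hcdef]
    simp only [hb0]
    exact count_swap_zero_zero l hstar
  have hIco : ∑ i ∈ Finset.range ℓ, c (b i) =
      c (b 0) + ∑ i ∈ Finset.Ico 1 ℓ, c (b i) := by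
    rw [Finset.range_eq_Ico, Finset.sum_eq_sum_Ico_succ_bot hℓ]
  have hb_ne : ∀ i, 1 ≤ i → i < ℓ → b i ≠ 0 := by
    intro i h1 h2 h
    have := hinj i 0 h2 hℓ (by rw [h, hb0])
    omega
  have hone : ∀ i ∈ Finset.Ico 1 ℓ, 1 ≤ c (b i) := by
    intro i hi
    obtain ⟨h1, h2⟩ := Finset.mem_Ico.mp hi
    exact hpos _ (hb_ne i h1 h2)
  have hIcoCard : ∑ i ∈ Finset.Ico 1 ℓ, (1 : ℕ) = ℓ - 1 := by
    simp [Nat.card_Ico]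
  have hsumle : ∑ i ∈ Finset.Ico 1 ℓ, c (b i) ≤ ℓ - 1 := by omega
  have heq1 : ∑ i ∈ Finset.Ico 1 ℓ, (1 : ℕ) = ∑ i ∈ Finset.Ico 1 ℓ, c (b i) := by
    have := Finset.sum_le_sum hone
    omega
  have hall := (Finset.sum_eq_sum_iff_of_le hone).mp heq1
  have part1 : ∀ i, 1 ≤ i → i < ℓ → l.count (Equiv.swap 0 (b i)) = 1 := by
    intro i h1 h2
    exact (hall i (Finset.mem_Ico.mpr ⟨h1, h2⟩)).symm
  refine ⟨part1, ?_⟩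
  have hconsec : ∀ i, 1 ≤ i → i + 1 < ℓ → ∀ p q : Fin l.length,
      l.get p = Equiv.swap 0 (b i) → l.get q = Equiv.swap 0 (b (i + 1)) → q < p := by
    intro i h1 h2 p q hp hq
    refine order_lemma l (b i) (b (i + 1)) hstar (hb_ne i h1 (by omega))
      (hb_ne (i + 1) (by omega) h2) ?_ ?_ ?_ ?_ p q hp hq
    · intro h
      have := hinj i (i + 1) (by omega) h2 h
      omega
    · exact le_of_eq (part1 i h1 (by omega))
    · exact le_of_eq (part1 (i + 1) (by omega) h2)
    · rw [hprod]
      exact hcyc i h2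
  have key : ∀ j i, 1 ≤ i → i < j → j < ℓ → ∀ p q : Fin l.length,
      l.get p = Equiv.swap 0 (b i) → l.get q = Equiv.swap 0 (b j) → q < p := by
    intro j
    induction j with
    | zero => intro i _ h; omega
    | succ j ihj =>
      intro i h1 hij hjl p q hp hq
      rcases Nat.lt_or_ge i j with h | h
      · have hcnt := part1 j (by omega) (by omega)
        have hmem : Equiv.swap 0 (b j) ∈ l := by
          rw [← List.count_pos_iff]
          omega
        obtain ⟨r, hr⟩ := List.mem_iff_get.mp hmem
        exact (hconsec j (by omega) hjl r q hr hq).trans (ihj i h1 h (by omega) p r hp hr)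
      · have hEq : i = j := by omega
        subst hEq
        exact hconsec i h1 hjl p q hp hq
  exact fun i j h1 hij hj => key j i h1 hij hj
end
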